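/- arXiv:1510.03086 — 4 statements merged into one kernel-verified Lean document; each statement's English description precedes it below -/
import Mathlib

section
/- Let A be an associative unital algebra over the field ℚ(v), let F, x, y ∈ A, and suppose that x satisfies the a-th order Serre relation with F and y satisfies the b-th order Serre relation with F (for nonnegative integers a, b). Then the product xy satisfies the (a+b)-th order Serre relation with F, i.e. Σ_{t=0}^{a+b+1} (−1)^{a+b+1−t} F^{(a+b+1−t)} (xy) F^{(t)} = 0. -/
/-- The quantum integer `[n] = (v^n - v^{-n})/(v - v^{-1})` in `ℚ(v)`. -/
noncomputable def qint (n : ℤ) : RatFunc ℚ :=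
  (RatFunc.X ^ n - RatFunc.X ^ (-n)) / (RatFunc.X - RatFunc.X⁻¹)

/-- The quantum factorial `[n]! = [n][n-1]⋯[1]`, with `[0]! = 1`. -/
noncomputable def qfact (n : ℕ) : RatFunc ℚ :=
  ∏ i ∈ Finset.range n, qint (i + 1)

/-- The quantum binomial coefficient `binom(n, k) = [n][n-1]⋯[n-k+1]/[k]!`
for `n : ℤ` and `k : ℕ`. -/
noncomputable def qbinom (n : ℤ) (k : ℕ) : RatFunc ℚ :=
  (∏ i ∈ Finset.range k, qint (n - i)) / qfact k

/-- The `n`-th divided power `F^{(n)} = (1/[n]!) F^n` of an element `F`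
of a `ℚ(v)`-algebra. -/
noncomputable def dpow {A : Type*} [Ring A] [Algebra (RatFunc ℚ) A]
    (F : A) (n : ℕ) : A :=
  (qfact n)⁻¹ • F ^ n

/-- `x` satisfies the `a`-th order Serre relation with `F`:
`Σ_{t=0}^{a+1} (-1)^{a+1-t} F^{(a+1-t)} x F^{(t)} = 0`. -/
def SerreRel {A : Type*} [Ring A] [Algebra (RatFunc ℚ) A]
    (F x : A) (a : ℕ) : Prop :=
  ∑ t ∈ Finset.range (a + 2),
      ((-1 : RatFunc ℚ) ^ (a + 1 - t)) • (dpow F (a + 1 - t) * x * dpow F t) = 0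


lemma X_ne : (RatFunc.X : RatFunc ℚ) ≠ 0 := RatFunc.X_ne_zero

lemma Xpow_ne_one {k : ℕ} (hk : k ≠ 0) : (RatFunc.X : RatFunc ℚ) ^ k ≠ 1 := by
  intro h
  have h2 : (algebraMap (Polynomial ℚ) (RatFunc ℚ)) (Polynomial.X ^ k) =
      (algebraMap (Polynomial ℚ) (RatFunc ℚ)) 1 := by
    simpa [map_pow, RatFunc.algebraMap_X] using h
  have h3 := RatFunc.algebraMap_injective ℚ h2
  have := congrArg Polynomial.natDegree h3
  simp [Polynomial.natDegree_X_pow] at this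
  exact hk this

lemma qint_pos_ne {n : ℕ} (hn : n ≠ 0) : qint (n : ℤ) ≠ 0 := by
  unfold qint
  apply div_ne_zero
  · rw [zpow_neg, zpow_natCast, sub_ne_zero]
    intro h
    have : (RatFunc.X : RatFunc ℚ) ^ n * RatFunc.X ^ n = 1 := by
      nth_rewrite 1 [h]; exact inv_mul_cancel₀ (pow_ne_zero _ X_ne)
    rw [← pow_add] at this
    exact Xpow_ne_one (by omega) this
  · rw [sub_ne_zero]
    intro h
    have : (RatFunc.X : RatFunc ℚ) * RatFunc.X = 1 := by
      nth_rewrite 2 [h]; exact mul_inv_cancel₀ X_ne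
    rw [← pow_two] at this
    exact Xpow_ne_one (by omega) this

lemma qfact_ne (n : ℕ) : qfact n ≠ 0 :=
  Finset.prod_ne_zero_iff.mpr fun i _ => by
    exact_mod_cast qint_pos_ne (n := i + 1) (by omega)

lemma qfact_succ (n : ℕ) : qfact (n + 1) = qfact n * qint (n + 1) := by
  rw [qfact, Finset.prod_range_succ]; rfl

lemma qint_split (m s : ℤ) :
    qint m = RatFunc.X ^ s * qint (m - s) + RatFunc.X ^ (s - m) * qint s := by
  unfold qint
  rw [← mul_div_assoc, ← mul_div_assoc, ← add_div]
  congr 1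
  rw [mul_sub, mul_sub, ← zpow_add₀ X_ne, ← zpow_add₀ X_ne, ← zpow_add₀ X_ne,
    ← zpow_add₀ X_ne]
  have e1 : s + (m - s) = m := by ring
  have e2 : s + -(m - s) = s - m + s := by ring
  have e3 : s - m + -s = -m := by ring
  rw [e1, e2, e3]
  ring

lemma pascal (s j : ℕ) :
    qfact (s+j+2) / (qfact (s+1) * qfact (j+1))
      = RatFunc.X ^ ((s:ℤ)+1) * (qfact (s+j+1) / (qfact (s+1) * qfact j))
        + RatFunc.X ^ (-(j:ℤ)-1) * (qfact (s+j+1) / (qfact s * qfact (j+1))) := by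
  have hsplit := qint_split ((s:ℤ)+(j:ℤ)+2) ((s:ℤ)+1)
  have e4 : ((s:ℤ)+(j:ℤ)+2) - ((s:ℤ)+1) = (j:ℤ)+1 := by ring
  have e5 : ((s:ℤ)+1) - ((s:ℤ)+(j:ℤ)+2) = -(j:ℤ)-1 := by ring
  rw [e4, e5] at hsplit
  have h1 : qfact (s+j+2) = qfact (s+j+1) * qint ((s:ℤ)+(j:ℤ)+2) := by
    rw [show s+j+2 = (s+j+1)+1 from rfl, qfact_succ]; push_cast; ring_nf
  have h2 : qfact (s+1) = qfact s * qint ((s:ℤ)+1) := by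
    rw [qfact_succ]
  have h3 : qfact (j+1) = qfact j * qint ((j:ℤ)+1) := by
    rw [qfact_succ]
  rw [h1, h2, h3, hsplit]
  have n1 := qfact_ne s
  have n2 := qfact_ne j
  have n3 := qfact_ne (s+j+1)
  have n4 : qint ((s:ℤ)+1) ≠ 0 := by
    have := qint_pos_ne (n := s+1) (by omega); push_cast at this; exact this
  have n5 : qint ((j:ℤ)+1) ≠ 0 := by
    have := qint_pos_ne (n := j+1) (by omega); push_cast at this; exact this
  field_simp

noncomputable def Ccoef (n : ℤ) (k s : ℕ) : RatFunc ℚ :=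
  if s ≤ k then
    (-1)^s * RatFunc.X ^ ((s:ℤ) * (n - k + 1)) * (qfact k / (qfact s * qfact (k - s)))
  else 0

lemma qfact_zero : qfact 0 = 1 := by simp [qfact]

lemma Ccoef_zero (n : ℤ) (k : ℕ) : Ccoef n k 0 = 1 := by
  rw [Ccoef, if_pos (Nat.zero_le k), qfact_zero]
  simp [div_self (qfact_ne k)]

lemma Ccoef_of_gt {n : ℤ} {k s : ℕ} (h : k < s) : Ccoef n k s = 0 := by
  rw [Ccoef, if_neg (by omega)]

lemma Ccoef_rec (n : ℤ) (k s : ℕ) :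
    Ccoef n (k+1) (s+1) = Ccoef n k (s+1) - RatFunc.X ^ (n - 2*k) * Ccoef n k s := by
  rcases lt_trichotomy k s with h | rfl | h
  · rw [Ccoef_of_gt (by omega), Ccoef_of_gt (by omega), Ccoef_of_gt (by omega)]
    ring
  · rw [Ccoef_of_gt (n := n) (k := k) (s := k+1) (by omega), Ccoef, Ccoef,
      if_pos le_rfl, if_pos le_rfl]
    simp only [Nat.sub_self, Nat.add_sub_cancel, qfact_zero, mul_one]
    rw [div_self (qfact_ne _), div_self (qfact_ne _)]
    have q : (RatFunc.X : RatFunc ℚ) ^ ((↑(k+1) : ℤ) * (n - ↑(k+1) + 1))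
        = RatFunc.X ^ (n - 2*(k:ℤ)) * RatFunc.X ^ ((k:ℤ) * (n - ↑k + 1)) := by
      rw [← zpow_add₀ X_ne]; congr 1; push_cast; ring
    rw [q]; ring
  · obtain ⟨j, rfl⟩ : ∃ j, k = s + 1 + j := ⟨k - (s+1), by omega⟩
    rw [Ccoef, Ccoef, Ccoef, if_pos (by omega), if_pos (by omega), if_pos (by omega)]
    have e1 : s+1+j+1 - (s+1) = j+1 := by omega
    have e2 : s+1+j - (s+1) = j := by omega
    have e3 : s+1+j - s = j+1 := by omega
    rw [e1, e2, e3]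
    have e4 : s+1+j+1 = s+j+2 := by omega
    have e5 : s+1+j = s+j+1 := by omega
    rw [e4, e5]
    have hp := pascal s j
    have q1 : (RatFunc.X : RatFunc ℚ) ^ (((s:ℤ)+1) * (n - ((s:ℤ)+(j:ℤ)+1) + 1))
        = RatFunc.X ^ (((s:ℤ)+1) * (n - ((s:ℤ)+(j:ℤ)+2) + 1)) * RatFunc.X ^ ((s:ℤ)+1) := by
      rw [← zpow_add₀ X_ne]; congr 1; ring
    have q2 : (RatFunc.X : RatFunc ℚ) ^ (n - 2*((s:ℤ)+(j:ℤ)+1)) * RatFunc.X ^ ((s:ℤ) * (n - ((s:ℤ)+(j:ℤ)+1) + 1))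
        = RatFunc.X ^ (((s:ℤ)+1) * (n - ((s:ℤ)+(j:ℤ)+2) + 1)) * RatFunc.X ^ (-(j:ℤ)-1) := by
      rw [← zpow_add₀ X_ne, ← zpow_add₀ X_ne]; congr 1; ring
    push_cast
    linear_combination ((-1 : RatFunc ℚ))^(s+1) * RatFunc.X ^ (((s:ℤ)+1) * (n - ((s:ℤ)+(j:ℤ)+2) + 1)) * hp
      - ((-1 : RatFunc ℚ))^(s+1) * (qfact (s+j+1) / (qfact (s+1) * qfact j)) * q1
      + ((-1 : RatFunc ℚ))^s * (qfact (s+j+1) / (qfact s * qfact (j+1))) * q2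

section Alg
variable {A : Type*} [Ring A] [Algebra (RatFunc ℚ) A]

noncomputable def Dop (F : A) (c : ℤ) : A →ₗ[RatFunc ℚ] A where
  toFun z := z * F - (RatFunc.X ^ c : RatFunc ℚ) • (F * z)
  map_add' u w := by simp only [add_mul, mul_add, smul_add]; abel
  map_smul' r z := by
    simp only [smul_mul_assoc, mul_smul_comm, smul_sub, RingHom.id_apply, smul_comm r]

lemma Dop_apply (F : A) (c : ℤ) (z : A) :
    Dop F c z = z * F - (RatFunc.X ^ c : RatFunc ℚ) • (F * z) := rfl

noncomputable def Tser (F : A) (n : ℤ) : ℕ → A → A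
  | 0, z => z
  | (k+1), z => Dop F (n - 2*k) (Tser F n k z)

lemma Tser_succ (F : A) (n : ℤ) (k : ℕ) (z : A) :
    Tser F n (k+1) z = Dop F (n - 2*k) (Tser F n k z) := rfl

lemma Tser_zero_elt (F : A) (n : ℤ) (k : ℕ) : Tser F n k (0 : A) = 0 := by
  induction k with
  | zero => rfl
  | succ k ih => rw [Tser_succ, ih, map_zero]

lemma Tser_stable {F : A} {n : ℤ} {k0 : ℕ} {z : A} (h : Tser F n k0 z = 0)
    {k : ℕ} (hk : k0 ≤ k) : Tser F n k z = 0 := by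
  obtain ⟨j, rfl⟩ := exists_add_of_le hk
  clear hk
  induction j with
  | zero => exact h
  | succ j ih => rw [show k0 + (j+1) = (k0+j)+1 from rfl, Tser_succ, ih, map_zero]

lemma Dop_split (F x y : A) (d e : ℤ) :
    Dop F (d + e) (x * y) = x * Dop F e y + (RatFunc.X ^ e : RatFunc ℚ) • (Dop F d x * y) := by
  simp only [Dop_apply, zpow_add₀ X_ne, mul_sub, sub_mul, smul_sub, smul_smul,
    smul_mul_assoc, mul_smul_comm, mul_assoc]
  rw [mul_comm (RatFunc.X ^ d) (RatFunc.X ^ e)]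
  abel

lemma Tser_expand (F : A) (n : ℤ) (k : ℕ) (z : A) :
    Tser F n k z = ∑ s ∈ Finset.range (k+1), Ccoef n k s • (F ^ s * z * F ^ (k - s)) := by
  induction k with
  | zero => simp [Tser, Ccoef_zero]
  | succ k ih =>
    rw [Tser_succ, ih, map_sum]
    have hterm : ∀ s ∈ Finset.range (k+1),
        Dop F (n-2*k) (Ccoef n k s • (F^s * z * F^(k-s)))
          = Ccoef n k s • (F^s * z * F^(k+1-s))
            - ((RatFunc.X : RatFunc ℚ)^(n-2*(k:ℤ)) * Ccoef n k s) • (F^(s+1) * z * F^(k-s)) := by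
      intro s hs
      have hs' : s ≤ k := by simpa using Nat.lt_succ_iff.mp (Finset.mem_range.mp hs)
      rw [map_smul, Dop_apply, smul_sub, smul_smul, mul_comm]
      congr 2
      · rw [mul_assoc, ← pow_succ, show k - s + 1 = k + 1 - s from by omega]
      · rw [← mul_assoc, ← mul_assoc, ← pow_succ']
    rw [Finset.sum_congr rfl hterm, Finset.sum_sub_distrib]
    conv_rhs => rw [Finset.sum_range_succ' _ (k+1)]
    have h0 : Ccoef n (k+1) 0 • (F ^ 0 * z * F ^ (k+1-0)) = Ccoef n k 0 • (F^0 * z * F^(k+1-0)) := by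
      rw [Ccoef_zero, Ccoef_zero]
    rw [h0]
    have hrec : ∀ s ∈ Finset.range (k+1),
        Ccoef n (k+1) (s+1) • (F ^ (s+1) * z * F ^ (k+1-(s+1)))
          = Ccoef n k (s+1) • (F ^ (s+1) * z * F ^ (k+1-(s+1)))
            - ((RatFunc.X : RatFunc ℚ)^(n-2*(k:ℤ)) * Ccoef n k s) • (F ^ (s+1) * z * F ^ (k+1-(s+1))) := by
      intro s hs
      rw [Ccoef_rec, sub_smul]
    rw [Finset.sum_congr rfl hrec, Finset.sum_sub_distrib]
    have hreassemble :
        (∑ s ∈ Finset.range (k+1), Ccoef n k (s+1) • (F ^ (s+1) * z * F ^ (k+1-(s+1))))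
            + Ccoef n k 0 • (F^0 * z * F^(k+1-0))
          = ∑ s ∈ Finset.range (k+1), Ccoef n k s • (F ^ s * z * F ^ (k+1-s)) := by
      rw [← Finset.sum_range_succ' (fun s => Ccoef n k s • (F ^ s * z * F ^ (k+1-s))) (k+1)]
      rw [Finset.sum_range_succ]
      simp [Ccoef_of_gt (Nat.lt_succ_self k)]
    have hsub : ∀ s, k + 1 - (s+1) = k - s := fun s => by omega
    simp only [hsub] at *
    rw [sub_add_eq_add_sub, hreassemble]

lemma Tser_serre (F : A) (n : ℕ) (z : A) :
    Tser F (n : ℤ) (n+1) z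
      = qfact (n+1) • ∑ t ∈ Finset.range (n+2),
          ((-1 : RatFunc ℚ) ^ (n+1-t)) • (dpow F (n+1-t) * z * dpow F t) := by
  rw [Tser_expand, Finset.smul_sum]
  conv_rhs => rw [← Finset.sum_range_reflect]
  refine Finset.sum_congr rfl ?_
  intro s hs
  have hs' : s ≤ n + 1 := by simp at hs; omega
  have e2 : n + 2 - 1 - s = n + 1 - s := by omega
  have e1 : n + 1 - (n + 1 - s) = s := by omega
  rw [e2, e1, Ccoef, if_pos hs']
  have e0 : (s:ℤ) * ((n:ℤ) - ↑(n+1) + 1) = 0 := by push_cast; ring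
  rw [e0, zpow_zero, mul_one, dpow, dpow, smul_mul_assoc, smul_mul_assoc,
    mul_smul_comm, smul_smul, smul_smul, smul_smul]
  congr 1
  have h1 := qfact_ne s
  have h2 := qfact_ne (n+1-s)
  field_simp

lemma Tser_mul_mem (F x y : A) (a b : ℕ) (s : ℕ) :
    Tser F ((a : ℤ) + (b : ℤ)) s (x * y)
      ∈ Submodule.span (RatFunc ℚ)
          {w : A | ∃ p q : ℕ, p + q = s ∧ w = Tser F (a : ℤ) p x * Tser F (b : ℤ) q y} := by
  induction s with
  | zero => exact Submodule.subset_span ⟨0, 0, rfl, rfl⟩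
  | succ s ih =>
    rw [Tser_succ]
    set S' : Set A :=
      {w : A | ∃ p q : ℕ, p + q = s + 1 ∧ w = Tser F (a : ℤ) p x * Tser F (b : ℤ) q y}
    refine Submodule.span_induction ?_ ?_ ?_ ?_ ih
    · rintro w ⟨p, q, hpq, rfl⟩
      have hd : (a : ℤ) + (b : ℤ) - 2 * (s : ℤ) = ((a : ℤ) - 2 * p) + ((b : ℤ) - 2 * q) := by
        have : (p : ℤ) + (q : ℤ) = (s : ℤ) := by exact_mod_cast hpq
        omega
      rw [hd, Dop_split]
      refine Submodule.add_mem _ ?_ (Submodule.smul_mem _ _ ?_)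
      · have : Tser F (a : ℤ) p x * Dop F ((b:ℤ) - 2*q) (Tser F (b:ℤ) q y)
            = Tser F (a : ℤ) p x * Tser F (b : ℤ) (q+1) y := by
          rw [Tser_succ]
        rw [this]
        exact Submodule.subset_span ⟨p, q+1, by omega, rfl⟩
      · have : Dop F ((a:ℤ) - 2*p) (Tser F (a:ℤ) p x) * Tser F (b:ℤ) q y
            = Tser F (a : ℤ) (p+1) x * Tser F (b : ℤ) q y := by
          rw [Tser_succ]
        rw [this]
        exact Submodule.subset_span ⟨p+1, q, by omega, rfl⟩
    · rw [map_zero]; exact Submodule.zero_mem _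
    · intro u w _ _ hu hw; rw [map_add]; exact Submodule.add_mem _ hu hw
    · intro r u _ hu; rw [map_smul]; exact Submodule.smul_mem _ _ hu

lemma Tser_mul_zero (F x y : A) (a b : ℕ)
    (hx : Tser F (a : ℤ) (a+1) x = 0) (hy : Tser F (b : ℤ) (b+1) y = 0) :
    Tser F ((a : ℤ) + (b : ℤ)) (a + b + 1) (x * y) = 0 := by
  have h := Tser_mul_mem F x y a b (a + b + 1)
  have hS : {w : A | ∃ p q : ℕ, p + q = a + b + 1 ∧
      w = Tser F (a : ℤ) p x * Tser F (b : ℤ) q y} ⊆ {(0 : A)} := by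
    rintro w ⟨p, q, hpq, rfl⟩
    rcases le_or_gt (a+1) p with hp | hp
    · rw [Tser_stable hx hp, zero_mul]; rfl
    · have hq : b + 1 ≤ q := by omega
      rw [Tser_stable hy hq, mul_zero]; rfl
  have h2 := Submodule.span_mono hS h
  rw [Submodule.span_zero_singleton] at h2
  exact (Submodule.mem_bot _).mp h2

end Alg


/-- If `x` satisfies the `a`-th order Serre relation with `F` and `y` satisfies the
`b`-th order Serre relation with `F`, then `xy` satisfies the `(a+b)`-th order Serre
relation with `F`. -/
theorem serre_order_additive {A : Type*} [Ring A] [Algebra (RatFunc ℚ) A]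
    (F x y : A) (a b : ℕ) (hx : SerreRel F x a) (hy : SerreRel F y b) :
    SerreRel F (x * y) (a + b) := by
  rw [SerreRel] at hx hy ⊢
  have hx' : Tser F (a : ℤ) (a+1) x = 0 := by rw [Tser_serre, hx, smul_zero]
  have hy' : Tser F (b : ℤ) (b+1) y = 0 := by rw [Tser_serre, hy, smul_zero]
  have h0 := Tser_mul_zero F x y a b hx' hy'
  have h1 : Tser F ((a + b : ℕ) : ℤ) (a+b+1) (x*y) = 0 := by push_cast; exact h0
  have h2 := Tser_serre F (a+b) (x*y)
  rw [h1] at h2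
  have h3 := h2.symm
  set Sm := ∑ t ∈ Finset.range (a + b + 2),
      ((-1 : RatFunc ℚ) ^ (a + b + 1 - t)) • (dpow F (a + b + 1 - t) * (x*y) * dpow F t) with hSm
  calc Sm = ((qfact (a+b+1))⁻¹ * qfact (a+b+1)) • Sm := by
        rw [inv_mul_cancel₀ (qfact_ne _), one_smul]
    _ = (qfact (a+b+1))⁻¹ • (qfact (a+b+1) • Sm) := by rw [mul_smul]
    _ = 0 := by rw [h3, smul_zero]
end

section
/- Fix a nonnegative integer c. For 0 ≤ s ≤ c, let P_s(T) := ∏_{t=1}^{c} (q^{s−t+1}·T − 1)/(q^t − 1), an element of ℚ(q)[T]; this is the q-binomial coefficient qbinom(a+s, c) viewed as a polynomial in the variable T = q^a. Then the c+1 polynomials P_0, P_1, …, P_c form a basis of the ℚ(q)-vector space of polynomials in T of degree at most c. -/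
/-- For `0 ≤ s ≤ c`, the polynomial `P_s(T) = ∏_{t=1}^{c} (q^{s-t+1}·T - 1)/(q^t - 1)`
in `ℚ(q)[T]`; this is the `q`-binomial coefficient `qbinom(a+s, c)` viewed as a
polynomial in the variable `T = q^a`. -/
noncomputable def Ppoly (c s : ℕ) : Polynomial (RatFunc ℚ) :=
  ∏ t ∈ Finset.Icc 1 c,
    (Polynomial.C (RatFunc.X ^ ((s : ℤ) - t + 1)) * Polynomial.X - 1) *
      Polynomial.C ((RatFunc.X ^ (t : ℕ) - 1)⁻¹)

lemma X_pow_ne_one {n : ℕ} (hn : n ≠ 0) : (RatFunc.X : RatFunc ℚ) ^ n ≠ 1 := by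
  intro h
  have h1 : (algebraMap (Polynomial ℚ) (RatFunc ℚ)) (Polynomial.X ^ n) =
      algebraMap (Polynomial ℚ) (RatFunc ℚ) 1 := by
    simpa [map_pow, RatFunc.algebraMap_X] using h
  have h2 : (Polynomial.X : Polynomial ℚ) ^ n = 1 := RatFunc.algebraMap_injective ℚ h1
  have := congrArg Polynomial.natDegree h2
  simp [Polynomial.natDegree_X_pow] at this
  exact hn this

lemma X_zpow_ne_one {k : ℤ} (hk : k ≠ 0) : (RatFunc.X : RatFunc ℚ) ^ k ≠ 1 := by
  rcases lt_trichotomy k 0 with h | h | h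
  · intro he
    have he' : (RatFunc.X : RatFunc ℚ) ^ (-k) = 1 := by
      rw [zpow_neg, he, inv_one]
    rw [show -k = ((-k).toNat : ℤ) by omega, zpow_natCast] at he'
    exact X_pow_ne_one (by omega) he'
  · exact absurd h hk
  · intro he
    rw [show k = (k.toNat : ℤ) by omega, zpow_natCast] at he
    exact X_pow_ne_one (by omega) he

lemma X_zpow_sub_one_ne_zero {k : ℤ} (hk : k ≠ 0) :
    (RatFunc.X : RatFunc ℚ) ^ k - 1 ≠ 0 :=
  sub_ne_zero.2 (X_zpow_ne_one hk)

lemma Ppoly_eval (c s a : ℕ) :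
    (Ppoly c s).eval ((RatFunc.X : RatFunc ℚ) ^ a) =
      ∏ t ∈ Finset.Icc 1 c,
        ((RatFunc.X : RatFunc ℚ) ^ ((s : ℤ) - t + 1 + a) - 1) *
          ((RatFunc.X : RatFunc ℚ) ^ (t : ℕ) - 1)⁻¹ := by
  rw [Ppoly, Polynomial.eval_prod]
  refine Finset.prod_congr rfl fun t ht => ?_
  have hX : (RatFunc.X : RatFunc ℚ) ≠ 0 := RatFunc.X_ne_zero
  rw [show (RatFunc.X : RatFunc ℚ) ^ ((s : ℤ) - t + 1 + a) =
      RatFunc.X ^ ((s : ℤ) - t + 1) * RatFunc.X ^ (a : ℕ) from by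
    rw [← zpow_natCast (RatFunc.X : RatFunc ℚ) a, ← zpow_add₀ hX]]
  simp

lemma Ppoly_eval_eq_zero {c s a : ℕ} (h : a + s < c) :
    (Ppoly c s).eval ((RatFunc.X : RatFunc ℚ) ^ a) = 0 := by
  rw [Ppoly_eval]
  apply Finset.prod_eq_zero (i := a + s + 1) (Finset.mem_Icc.2 ⟨by omega, by omega⟩)
  have : (s : ℤ) - (a + s + 1 : ℕ) + 1 + a = 0 := by push_cast; ring
  rw [this]
  simp

lemma Ppoly_eval_ne_zero {c s a : ℕ} (h : c ≤ a + s) :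
    (Ppoly c s).eval ((RatFunc.X : RatFunc ℚ) ^ a) ≠ 0 := by
  rw [Ppoly_eval]
  refine Finset.prod_ne_zero_iff.2 fun t ht => ?_
  rw [Finset.mem_Icc] at ht
  refine mul_ne_zero (X_zpow_sub_one_ne_zero (by omega)) (inv_ne_zero ?_)
  rw [← zpow_natCast]
  exact X_zpow_sub_one_ne_zero (by exact_mod_cast (by omega : (t : ℤ) ≠ 0))

lemma factor_degree (e b : RatFunc ℚ) :
    ((Polynomial.C e * Polynomial.X - 1) * Polynomial.C b).degree ≤ 1 := by
  refine le_trans (Polynomial.degree_mul_le _ _) ?_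
  have h1 : (Polynomial.C e * Polynomial.X - 1 : Polynomial (RatFunc ℚ)).degree ≤ 1 := by
    refine le_trans (Polynomial.degree_sub_le _ _) (max_le ?_ ?_)
    · refine le_trans (Polynomial.degree_mul_le _ _) ?_
      simpa [Polynomial.degree_X] using
        add_le_add Polynomial.degree_C_le (le_refl (Polynomial.X : Polynomial (RatFunc ℚ)).degree)
    · exact le_trans Polynomial.degree_one_le (by norm_num)
  calc (Polynomial.C e * Polynomial.X - 1 : Polynomial (RatFunc ℚ)).degree +
        (Polynomial.C b).degree ≤ 1 + 0 := add_le_add h1 Polynomial.degree_C_le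
    _ = 1 := by norm_num

lemma Ppoly_mem (c s : ℕ) :
    Ppoly c s ∈ Polynomial.degreeLT (RatFunc ℚ) (c + 1) := by
  rw [Polynomial.mem_degreeLT]
  have hle : (Ppoly c s).degree ≤ (c : WithBot ℕ) := by
    rw [Ppoly]
    refine le_trans (Polynomial.degree_prod_le _ _) ?_
    refine le_trans (Finset.sum_le_sum fun t _ => factor_degree _ _) ?_
    rw [Finset.sum_const, Nat.card_Icc]
    simp [nsmul_eq_mul]
  refine lt_of_le_of_lt hle ?_
  exact_mod_cast Nat.lt_succ_self c

/-- The `c+1` polynomials `P_0, …, P_c` form a basis of the `ℚ(q)`-vector space of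
polynomials of degree at most `c`: they are linearly independent and span the
space of polynomials of degree `< c + 1`. -/
theorem Ppoly_basis (c : ℕ) :
    LinearIndependent (RatFunc ℚ) (fun s : Fin (c + 1) => Ppoly c s) ∧
      Submodule.span (RatFunc ℚ) (Set.range fun s : Fin (c + 1) => Ppoly c s)
        = Polynomial.degreeLT (RatFunc ℚ) (c + 1) := by
  set K := RatFunc ℚ
  set M : Matrix (Fin (c + 1)) (Fin (c + 1)) K :=
    Matrix.of fun s a : Fin (c + 1) => (Ppoly c s).eval ((RatFunc.X : K) ^ (a : ℕ)) with hM
  set N : Matrix (Fin (c + 1)) (Fin (c + 1)) K := M.submatrix id Fin.revPerm with hN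
  -- N is lower triangular with nonzero diagonal
  have hNtri : N.BlockTriangular OrderDual.toDual := by
    intro i j hij
    have hij' : (i : ℕ) < (j : ℕ) := hij
    have : ((Fin.revPerm j : Fin (c + 1)) : ℕ) = c - j := by
      simp [Fin.revPerm, Fin.val_rev]
    show (Ppoly c i).eval ((RatFunc.X : K) ^ ((Fin.revPerm j : Fin (c + 1)) : ℕ)) = 0
    rw [this]
    exact Ppoly_eval_eq_zero (by omega)
  have hNdiag : ∀ i : Fin (c + 1), N i i ≠ 0 := by
    intro i
    have : ((Fin.revPerm i : Fin (c + 1)) : ℕ) = c - i := by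
      simp [Fin.revPerm, Fin.val_rev]
    show (Ppoly c i).eval ((RatFunc.X : K) ^ ((Fin.revPerm i : Fin (c + 1)) : ℕ)) ≠ 0
    rw [this]
    have hi : (i : ℕ) ≤ c := by omega
    exact Ppoly_eval_ne_zero (by omega)
  have hdetN : N.det ≠ 0 := by
    rw [Matrix.det_of_lowerTriangular N hNtri]
    exact Finset.prod_ne_zero_iff.2 fun i _ => hNdiag i
  have hMN : N.submatrix id Fin.revPerm = M := by
    ext s a
    simp [hN, Matrix.submatrix]
  have hdetM : M.det ≠ 0 := by
    have h := Matrix.det_permute' (Fin.revPerm : Equiv.Perm (Fin (c + 1))) N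
    rw [hMN] at h
    rw [h]
    rcases Int.units_eq_one_or (Equiv.Perm.sign (Fin.revPerm : Equiv.Perm (Fin (c + 1)))) with
      hs | hs <;> rw [hs] <;> simpa using hdetN
  have hMunit : IsUnit M := (Matrix.isUnit_iff_isUnit_det M).2 (isUnit_iff_ne_zero.2 hdetM)
  have hrows : LinearIndependent K (fun s => M s) :=
    Matrix.linearIndependent_rows_iff_isUnit.2 hMunit
  -- pull back linear independence along evaluation
  set L : Polynomial K →ₗ[K] (Fin (c + 1) → K) :=
    LinearMap.pi fun a : Fin (c + 1) => Polynomial.leval ((RatFunc.X : K) ^ (a : ℕ)) with hL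
  have hcomp : L ∘ (fun s : Fin (c + 1) => Ppoly c s) = fun s => M s := rfl
  have hli : LinearIndependent K (fun s : Fin (c + 1) => Ppoly c s) :=
    LinearIndependent.of_comp L (by rw [hcomp]; exact hrows)
  refine ⟨hli, ?_⟩
  -- span
  set W := Polynomial.degreeLT K (c + 1) with hW
  set v : Fin (c + 1) → W := fun s => ⟨Ppoly c s, Ppoly_mem c s⟩ with hv
  have hcomp2 : W.subtype ∘ v = fun s : Fin (c + 1) => Ppoly c s := rfl
  have hvli : LinearIndependent K v :=
    LinearIndependent.of_comp W.subtype (by rw [hcomp2]; exact hli)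
  have hfr : Module.finrank K W = c + 1 := by
    rw [LinearEquiv.finrank_eq (Polynomial.degreeLTEquiv K (c + 1))]
    simp
  have hspan : Submodule.span K (Set.range v) = ⊤ :=
    hvli.span_eq_top_of_card_eq_finrank (by simp [hfr])
  calc Submodule.span K (Set.range fun s : Fin (c + 1) => Ppoly c s)
      = Submodule.span K (W.subtype '' Set.range v) := by rw [← Set.range_comp, hcomp2]
    _ = Submodule.map W.subtype (Submodule.span K (Set.range v)) :=
        (Submodule.map_span _ _).symm
    _ = Submodule.map W.subtype ⊤ := by rw [hspan]
    _ = W := by rw [Submodule.map_top, Submodule.range_subtype]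
end

section
/- Fix an integer r ≥ 0, and for integers n ≥ 0 and m_1, …, m_r ≥ 0 let S(n, m_1, …, m_r) denote the number of steep sequences of degree (n; m_1, …, m_r); extend S by 0 whenever any argument is negative. Then S(0, 0, …, 0) = 1, and for every (n, m_1, …, m_r) ≠ (0, 0, …, 0) with all entries nonnegative: S(n, m⃗) = Σ_{k ≥ 1} S(n−k, m⃗) − Σ_{∅ ≠ p ⊆ {1,…,r}} (−1)^{|p|} S(n, m⃗ − e⃗_p) + Σ_{k ≥ 1} Σ_{∅ ≠ p ⊆ {1,…,r}} (−1)^{|p|} S(n−k, m⃗ − (k+1)·e⃗_p), where e⃗_p denotes the 0-1 vector with 1 in coordinate i exactly when i ∈ p. -/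
/-- A steep sequence of degree `(n; m_1, …, m_r)`: an integer `N ≥ 0`, positive
integers `c_1, …, c_N` summing to `n`, and nonnegative integers `p_{i,k}`
(`0 ≤ i ≤ N`, `1 ≤ k ≤ r`) with `Σ_i p_{i,k} = m_k` and `p_{i,k} ≤ c_i` for
`1 ≤ i ≤ N`. -/
structure SteepSeq (r n : ℕ) (m : Fin r → ℕ) where
  N : ℕ
  c : Fin N → ℕ
  c_pos : ∀ i, 0 < c i
  p : Fin (N + 1) → Fin r → ℕ
  sum_c : ∑ i, c i = n
  sum_p : ∀ k, ∑ i, p i k = m k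
  steep : ∀ (i : Fin N) (k : Fin r), p i.succ k ≤ c i

/-- `S r n m` is the number of steep sequences of degree `(n; m)`, extended by `0`
whenever any argument is negative. -/
noncomputable def steepCount (r : ℕ) (n : ℤ) (m : Fin r → ℤ) : ℤ :=
  if 0 ≤ n ∧ ∀ k, 0 ≤ m k then
    (Nat.card (SteepSeq r n.toNat fun k => (m k).toNat) : ℤ)
  else 0

/-- The 0-1 vector `e⃗_p` with `1` in coordinate `i` exactly when `i ∈ p`. -/
def evec {r : ℕ} (p : Finset (Fin r)) : Fin r → ℤ := fun i => if i ∈ p then 1 else 0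

namespace SteepAux

variable {r : ℕ}

/-- The finset of `q : Fin r → ℕ` with `q k ≤ m k` for all `k`. -/
def Q (m : Fin r → ℕ) : Finset (Fin r → ℕ) := Fintype.piFinset fun k => Finset.range (m k + 1)

lemma mem_Q {m q : Fin r → ℕ} : q ∈ Q m ↔ ∀ k, q k ≤ m k := by
  simp [Q, Nat.lt_succ_iff]

/-- The finset of "steep lists" of degree `(n; m)` with empty initial block. -/
def LFin (r : ℕ) : ℕ → (Fin r → ℕ) → Finset (List (ℕ × (Fin r → ℕ)))
  | 0, m => if m = 0 then {([] : List (ℕ × (Fin r → ℕ)))} else ∅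
  | (n+1), m => (Finset.range (n+1)).biUnion fun c' =>
      (Fintype.piFinset fun k => Finset.range (min (c'+1) (m k) + 1)).biUnion fun p =>
        (LFin r (n - c') (m - p)).image (fun l => ((c'+1, p)) :: l)
  decreasing_by exact Nat.lt_succ_of_le (Nat.sub_le _ _)

lemma mem_LFin : ∀ (n : ℕ) (m : Fin r → ℕ) (l : List (ℕ × (Fin r → ℕ))),
    l ∈ LFin r n m ↔ ((∀ e ∈ l, 0 < e.1 ∧ ∀ k, e.2 k ≤ e.1) ∧
      (l.map Prod.fst).sum = n ∧ ∀ k, (l.map fun e => e.2 k).sum = m k) := by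
  intro n
  induction n using Nat.strong_induction_on with
  | _ n ih =>
    match n with
    | 0 =>
      intro m l
      rw [LFin]
      constructor
      · intro hl
        split at hl
        · next hm =>
          simp only [Finset.mem_singleton] at hl
          subst hl hm
          simp
        · simp at hl
      · rintro ⟨h1, h2, h3⟩
        match l with
        | [] =>
          have : m = 0 := by funext k; simpa using (h3 k).symm
          simp [this]
        | e :: t =>
          exfalso
          have := (h1 e (by simp)).1
          simp only [List.map_cons, List.sum_cons] at h2
          omega
    | n + 1 =>
      intro m l
      rw [LFin]
      simp only [Finset.mem_biUnion, Finset.mem_image, Finset.mem_range,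
        Fintype.mem_piFinset]
      constructor
      · rintro ⟨c', hc', p, hp, l', hl', rfl⟩
        rw [ih (n - c') (Nat.lt_succ_of_le (Nat.sub_le _ _))] at hl'
        obtain ⟨h1, h2, h3⟩ := hl'
        have hpm : ∀ k, p k ≤ m k := fun k => by
          have := hp k; simp only [Finset.mem_range, Nat.lt_succ_iff] at this; omega
        have hpc : ∀ k, p k ≤ c' + 1 := fun k => by
          have := hp k; simp only [Finset.mem_range, Nat.lt_succ_iff] at this; omega
        refine ⟨?_, ?_, ?_⟩
        · intro e he
          rcases List.mem_cons.mp he with rfl | he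
          · exact ⟨Nat.succ_pos _, hpc⟩
          · exact h1 e he
        · simp only [List.map_cons, List.sum_cons, h2]; omega
        · intro k
          simp only [List.map_cons, List.sum_cons, h3 k, Pi.sub_apply]
          have := hpm k; omega
      · rintro ⟨h1, h2, h3⟩
        match l with
        | [] => simp at h2
        | (c, p) :: l' =>
          simp only [List.map_cons, List.sum_cons] at h2 h3
          obtain ⟨hc0, hpc⟩ := h1 (c, p) (by simp)
          simp only at hc0 hpc h2 h3
          have hcn : c ≤ n + 1 := by omega
          refine ⟨c - 1, by omega, p, ?_, l', ?_, ?_⟩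
          · intro k
            simp only [Finset.mem_range, Nat.lt_succ_iff, le_min_iff]
            have := h3 k
            constructor
            · have := hpc k; omega
            · omega
          · rw [ih (n - (c - 1)) (Nat.lt_succ_of_le (Nat.sub_le _ _))]
            refine ⟨fun e he => h1 e (by simp [he]), by omega, fun k => ?_⟩
            simp only [Pi.sub_apply]
            have := h3 k; omega
          · have : c - 1 + 1 = c := by omega
            rw [this]

lemma LFin_card (n : ℕ) (m : Fin r → ℕ) :
    (LFin r n m).card = (if n = 0 ∧ m = 0 then 1 else 0) +
      ∑ c ∈ Finset.Icc 1 n, ∑ q ∈ (Q m).filter (fun q => ∀ k, q k < c + 1),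
        (LFin r (n - c) (m - q)).card := by
  match n with
  | 0 =>
    rw [LFin]
    by_cases hm : m = 0 <;> simp [hm]
  | n + 1 =>
    rw [LFin]
    have hd1 : ∀ x ∈ Finset.range (n+1), ∀ y ∈ Finset.range (n+1), x ≠ y →
        Disjoint ((Fintype.piFinset fun k => Finset.range (min (x+1) (m k) + 1)).biUnion fun p =>
          (LFin r (n - x) (m - p)).image (fun l => ((x+1, p)) :: l))
        ((Fintype.piFinset fun k => Finset.range (min (y+1) (m k) + 1)).biUnion fun p =>
          (LFin r (n - y) (m - p)).image (fun l => ((y+1, p)) :: l)) := by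
      intro x _ y _ hxy
      rw [Finset.disjoint_left]
      intro l hx hy
      simp only [Finset.mem_biUnion, Finset.mem_image] at hx hy
      obtain ⟨p, _, l', _, rfl⟩ := hx
      obtain ⟨p2, _, l2, _, he⟩ := hy
      apply hxy
      have h1 := ((List.cons.injEq _ _ _ _).mp he).1
      have h2 := ((Prod.mk.injEq _ _ _ _).mp h1).1
      omega
    rw [Finset.card_biUnion hd1]
    have step : ∀ c' ∈ Finset.range (n+1),
        ((Fintype.piFinset fun k => Finset.range (min (c'+1) (m k) + 1)).biUnion fun p =>
          (LFin r (n - c') (m - p)).image (fun l => ((c'+1, p)) :: l)).card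
        = ∑ q ∈ (Q m).filter (fun q => ∀ k, q k < (c'+1) + 1),
            (LFin r ((n+1) - (c'+1)) (m - q)).card := by
      intro c' _
      have hd2 : ∀ x ∈ (Fintype.piFinset fun k => Finset.range (min (c'+1) (m k) + 1)),
          ∀ y ∈ (Fintype.piFinset fun k => Finset.range (min (c'+1) (m k) + 1)), x ≠ y →
          Disjoint ((LFin r (n - c') (m - x)).image (fun l => ((c'+1, x)) :: l))
            ((LFin r (n - c') (m - y)).image (fun l => ((c'+1, y)) :: l)) := by
        intro x _ y _ hxy
        rw [Finset.disjoint_left]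
        intro l hx hy
        simp only [Finset.mem_image] at hx hy
        obtain ⟨l', _, rfl⟩ := hx
        obtain ⟨l2, _, he⟩ := hy
        exact hxy (((Prod.mk.injEq _ _ _ _).mp ((List.cons.injEq _ _ _ _).mp he).1).2).symm
      rw [Finset.card_biUnion hd2]
      have hset : (Fintype.piFinset fun k => Finset.range (min (c'+1) (m k) + 1))
          = (Q m).filter (fun q => ∀ k, q k < (c'+1) + 1) := by
        ext q
        simp only [Fintype.mem_piFinset, Finset.mem_range, Finset.mem_filter, Q,
          Nat.lt_succ_iff, le_min_iff]
        constructor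
        · intro h
          exact ⟨fun k => (h k).2, fun k => by have := (h k).1; omega⟩
        · intro h k
          exact ⟨by have := h.2 k; omega, h.1 k⟩
      rw [hset]
      apply Finset.sum_congr rfl
      intro q _
      rw [Finset.card_image_of_injective _ (fun a b h => by simpa using h)]
      rw [Nat.succ_sub_succ]
    rw [Finset.sum_congr rfl step]
    rw [show (if n + 1 = 0 ∧ m = 0 then 1 else 0) = 0 by simp]
    rw [zero_add]
    refine Finset.sum_nbij' (fun c' => c' + 1) (fun c => c - 1) ?_ ?_ ?_ ?_ ?_
    · intro a ha; simp at ha ⊢; omega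
    · intro a ha; simp at ha ⊢; omega
    · intro a ha; simp
    · intro a ha; simp at ha ⊢; omega
    · intro a _; rfl

def PairFin (r n : ℕ) (m : Fin r → ℕ) : Finset ((Fin r → ℕ) × List (ℕ × (Fin r → ℕ))) :=
  (Q m).biUnion fun q => (LFin r n (m - q)).image (fun l => (q, l))

lemma PairFin_card (n : ℕ) (m : Fin r → ℕ) :
    (PairFin r n m).card = ∑ q ∈ Q m, (LFin r n (m - q)).card := by
  rw [PairFin, Finset.card_biUnion]
  · exact Finset.sum_congr rfl fun q _ =>
      Finset.card_image_of_injective _ (fun a b h => by simpa using h)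
  · intro x _ y _ hxy
    rw [Function.onFun_apply, Finset.disjoint_left]
    intro a hx hy
    simp only [Finset.mem_image] at hx hy
    obtain ⟨l, _, rfl⟩ := hx
    obtain ⟨l2, _, he⟩ := hy
    exact hxy (((Prod.mk.injEq _ _ _ _).mp he).1).symm

def Phi (n : ℕ) (m : Fin r → ℕ) (s : SteepSeq r n m) :
    (Fin r → ℕ) × List (ℕ × (Fin r → ℕ)) :=
  (s.p 0, List.ofFn fun i : Fin s.N => (s.c i, s.p i.succ))

lemma p_le (n : ℕ) (m : Fin r → ℕ) (s : SteepSeq r n m) (i : Fin (s.N + 1)) (k : Fin r) :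
    s.p i k ≤ m k := by
  rw [← s.sum_p k]
  exact Finset.single_le_sum (f := fun j => s.p j k) (fun _ _ => Nat.zero_le _)
    (Finset.mem_univ i)

lemma Phi_mem (n : ℕ) (m : Fin r → ℕ) (s : SteepSeq r n m) :
    Phi n m s ∈ PairFin r n m := by
  rw [PairFin, Finset.mem_biUnion]
  refine ⟨s.p 0, mem_Q.mpr fun k => p_le n m s 0 k, ?_⟩
  rw [Finset.mem_image]
  refine ⟨_, ?_, rfl⟩
  rw [mem_LFin]
  refine ⟨?_, ?_, ?_⟩
  · intro e he
    rw [List.mem_ofFn] at he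
    obtain ⟨i, rfl⟩ := he
    exact ⟨s.c_pos i, fun k => s.steep i k⟩
  · rw [List.map_ofFn, List.sum_ofFn]
    exact s.sum_c
  · intro k
    rw [List.map_ofFn, List.sum_ofFn]
    have h := s.sum_p k
    rw [Fin.sum_univ_succ] at h
    simp only [Pi.sub_apply, Function.comp]
    omega

lemma Phi_injective (n : ℕ) (m : Fin r → ℕ) : Function.Injective (Phi n m) := by
  rintro ⟨N1, c1, pos1, p1, sc1, sp1, st1⟩ ⟨N2, c2, pos2, p2, sc2, sp2, st2⟩ h
  simp only [Phi, Prod.mk.injEq] at h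
  obtain ⟨h1, h2⟩ := h
  have hN : N1 = N2 := by
    have := congrArg List.length h2
    simpa using this
  subst hN
  rw [List.ofFn_inj] at h2
  have hc : c1 = c2 := funext fun i => congrArg Prod.fst (congrFun h2 i)
  have hp : p1 = p2 := by
    funext i k
    induction i using Fin.cases with
    | zero => rw [h1]
    | succ i => exact congrFun (congrArg Prod.snd (congrFun h2 i)) k
  subst hc hp
  rfl

lemma Phi_surjective (n : ℕ) (m : Fin r → ℕ) (x : (Fin r → ℕ) × List (ℕ × (Fin r → ℕ)))
    (hx : x ∈ PairFin r n m) : ∃ s, Phi n m s = x := by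
  rw [PairFin, Finset.mem_biUnion] at hx
  obtain ⟨q, hq', hmem⟩ := hx
  rw [Finset.mem_image] at hmem
  obtain ⟨l, hl', rfl⟩ := hmem
  rw [mem_LFin] at hl'
  obtain ⟨h1, h2, h3⟩ := hl'
  have hq : ∀ k, q k ≤ m k := mem_Q.mp hq'
  have hsum : ∀ k, (l.map fun e => e.2 k).sum = m k - q k := fun k => by
    have := h3 k; simpa using this
  refine ⟨⟨l.length, fun i => (l.get i).1, fun i => (h1 (l.get i) (l.get_mem _)).1,
    Fin.cases q (fun i => (l.get i).2), ?_, ?_, ?_⟩, ?_⟩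
  · conv_rhs => rw [← h2, ← List.ofFn_get l]
    rw [List.map_ofFn, List.sum_ofFn]
    rfl
  · intro k
    rw [Fin.sum_univ_succ]
    simp only [Fin.cases_zero, Fin.cases_succ]
    have : ∑ i : Fin l.length, (l.get i).2 k = m k - q k := by
      conv_rhs => rw [← hsum k, ← List.ofFn_get l]
      rw [List.map_ofFn, List.sum_ofFn]
      rfl
    rw [this]
    have := hq k
    omega
  · intro i k
    simp only [Fin.cases_succ]
    exact (h1 (l.get i) (l.get_mem _)).2 k
  · simp only [Phi, Fin.cases_zero, Fin.cases_succ, Prod.mk.injEq]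
    refine ⟨trivial, ?_⟩
    conv_rhs => rw [← List.ofFn_get l]

lemma card_steepSeq (n : ℕ) (M : Fin r → ℕ) :
    Nat.card (SteepSeq r n M) = ∑ q ∈ Q M, (LFin r n (M - q)).card := by
  have hbij : Function.Bijective
      (fun s : SteepSeq r n M => (⟨Phi n M s, Phi_mem n M s⟩ : {x // x ∈ PairFin r n M})) := by
    constructor
    · intro a b h
      exact Phi_injective n M (Subtype.ext_iff.mp h)
    · rintro ⟨x, hx⟩
      obtain ⟨s, hs⟩ := Phi_surjective n M x hx
      exact ⟨s, Subtype.ext hs⟩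
  calc Nat.card (SteepSeq r n M) = Nat.card {x // x ∈ PairFin r n M} :=
        Nat.card_eq_of_bijective _ hbij
    _ = (PairFin r n M).card := Nat.card_eq_finsetCard _
    _ = _ := PairFin_card n M

lemma steepCount_eq (n : ℤ) (m : Fin r → ℤ) (hn : 0 ≤ n) (hm : ∀ k, 0 ≤ m k) :
    steepCount r n m = ∑ q ∈ Q (fun k => (m k).toNat),
      ((LFin r n.toNat ((fun k => (m k).toNat) - q)).card : ℤ) := by
  rw [steepCount, if_pos ⟨hn, hm⟩, card_steepSeq]
  push_cast
  rfl

lemma steepCount_neg (n : ℤ) (m : Fin r → ℤ) (h : ¬(0 ≤ n ∧ ∀ k, 0 ≤ m k)) :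
    steepCount r n m = 0 := by
  rw [steepCount, if_neg h]

lemma stepA (nn t : ℕ) (ht : 1 ≤ t) (m : Fin r → ℕ) (p : Finset (Fin r)) :
    steepCount r (nn : ℤ) ((fun k => (m k : ℤ)) - (t : ℤ) • evec p)
      = ∑ q ∈ (Q m).filter (fun q => ∀ k ∈ p, t ≤ q k),
          ((LFin r nn (m - q)).card : ℤ) := by
  by_cases hall : ∀ k ∈ p, t ≤ m k
  · set w : Fin r → ℕ := fun k => if k ∈ p then t else 0 with hw
    have harg : (fun k => (m k : ℤ)) - (t : ℤ) • evec p = fun k => ((m k - w k : ℕ) : ℤ) := by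
      funext k
      simp only [Pi.sub_apply, Pi.smul_apply, evec, smul_eq_mul, hw]
      by_cases hk : k ∈ p
      · have := hall k hk
        simp only [hk, if_true, mul_one]
        omega
      · simp [hk]
    rw [harg, steepCount_eq _ _ (by positivity) (fun k => by positivity)]
    have hfun : (fun k => (((m k - w k : ℕ) : ℤ)).toNat) = (fun k => m k - w k) := by
      funext k; simp
    rw [show ((nn : ℤ)).toNat = nn from by simp, hfun]
    refine Finset.sum_nbij' (fun q' => q' + w) (fun q => q - w) ?_ ?_ ?_ ?_ ?_
    · intro q' hq'
      rw [mem_Q] at hq'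
      rw [Finset.mem_filter, mem_Q]
      constructor
      · intro k
        have h1 := hq' k
        simp only [Pi.add_apply]
        by_cases hk : k ∈ p
        · have h2 := hall k hk
          rw [show w k = t from if_pos hk] at h1 ⊢
          omega
        · rw [show w k = 0 from if_neg hk] at h1 ⊢
          omega
      · intro k hk
        simp only [Pi.add_apply]
        rw [show w k = t from if_pos hk]
        omega
    · intro q hq
      rw [Finset.mem_filter, mem_Q] at hq
      rw [mem_Q]
      intro k
      have h1 := hq.1 k
      simp only [Pi.sub_apply]
      by_cases hk : k ∈ p
      · rw [show w k = t from if_pos hk]; omega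
      · rw [show w k = 0 from if_neg hk]; omega
    · intro q' _
      funext k
      simp only [Pi.add_apply, Pi.sub_apply]
      omega
    · intro q hq
      rw [Finset.mem_filter, mem_Q] at hq
      funext k
      simp only [Pi.add_apply, Pi.sub_apply]
      by_cases hk : k ∈ p
      · have h2 := hq.2 k hk
        rw [show w k = t from if_pos hk]
        omega
      · rw [show w k = 0 from if_neg hk]
        omega
    · intro q' hq'
      rw [mem_Q] at hq'
      have harg2 : ((fun k => m k - w k) - q') = m - (q' + w) := by
        funext k
        simp only [Pi.sub_apply, Pi.add_apply]
        have h1 := hq' k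
        by_cases hk : k ∈ p
        · have h2 := hall k hk
          rw [show w k = t from if_pos hk] at h1 ⊢
          omega
        · rw [show w k = 0 from if_neg hk] at h1 ⊢
          omega
      rw [← harg2]
  · push_neg at hall
    obtain ⟨k0, hk0, hmk0⟩ := hall
    rw [steepCount_neg]
    · symm
      apply Finset.sum_eq_zero
      intro q hq
      rw [Finset.mem_filter, mem_Q] at hq
      exfalso
      have h1 := hq.1 k0
      have h2 := hq.2 k0 hk0
      omega
    · rintro ⟨-, hm⟩
      have := hm k0
      simp only [Pi.sub_apply, Pi.smul_apply, evec, hk0, if_true, smul_eq_mul, mul_one] at this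
      omega

lemma key (nn t : ℕ) (ht : 1 ≤ t) (m : Fin r → ℕ) :
    ∑ p ∈ (Finset.univ : Finset (Fin r)).powerset,
        (-1 : ℤ) ^ p.card * steepCount r (nn : ℤ) ((fun k => (m k : ℤ)) - (t : ℤ) • evec p)
      = ∑ q ∈ (Q m).filter (fun q => ∀ k, q k < t), ((LFin r nn (m - q)).card : ℤ) := by
  have h1 : ∀ p ∈ (Finset.univ : Finset (Fin r)).powerset,
      (-1 : ℤ) ^ p.card * steepCount r (nn : ℤ) ((fun k => (m k : ℤ)) - (t : ℤ) • evec p)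
      = ∑ q ∈ Q m, (if p ⊆ Finset.univ.filter (fun k => t ≤ q k) then
          (-1 : ℤ) ^ p.card * ((LFin r nn (m - q)).card : ℤ) else 0) := by
    intro p _
    rw [stepA nn t ht m p, Finset.mul_sum, ← Finset.sum_filter]
    apply Finset.sum_congr
    · apply Finset.filter_congr
      intro q _
      constructor
      · intro h
        intro k hk
        simp only [Finset.mem_filter, Finset.mem_univ, true_and]
        exact h k hk
      · intro h k hk
        have := h hk
        simp only [Finset.mem_filter, Finset.mem_univ, true_and] at this
        exact this
    · intros; rfl
  rw [Finset.sum_congr rfl h1, Finset.sum_comm]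
  have h3 : ∀ q ∈ Q m,
      (∑ p ∈ (Finset.univ : Finset (Fin r)).powerset,
        (if p ⊆ Finset.univ.filter (fun k => t ≤ q k) then
          (-1 : ℤ) ^ p.card * ((LFin r nn (m - q)).card : ℤ) else 0))
      = (if (∀ k, q k < t) then ((LFin r nn (m - q)).card : ℤ) else 0) := by
    intro q _
    have h2 : ∑ p ∈ (Finset.univ : Finset (Fin r)).powerset,
        (if p ⊆ Finset.univ.filter (fun k => t ≤ q k) then
          (-1 : ℤ) ^ p.card * ((LFin r nn (m - q)).card : ℤ) else 0)
        = ∑ p ∈ (Finset.univ.filter (fun k => t ≤ q k)).powerset,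
            (-1 : ℤ) ^ p.card * ((LFin r nn (m - q)).card : ℤ) := by
      rw [← Finset.sum_filter]
      apply Finset.sum_congr
      · ext p
        simp only [Finset.mem_filter, Finset.mem_powerset]
        constructor
        · exact fun h => h.2
        · exact fun h => ⟨Finset.subset_univ p, h⟩
      · intros; rfl
    rw [h2, ← Finset.sum_mul, Finset.sum_powerset_neg_one_pow_card]
    by_cases hq : ∀ k, q k < t
    · have hemp : Finset.univ.filter (fun k => t ≤ q k) = ∅ :=
        Finset.filter_eq_empty_iff.mpr (fun k _ => by have := hq k; omega)
      rw [if_pos hemp, if_pos hq, one_mul]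
    · have hne : ¬(Finset.univ.filter (fun k => t ≤ q k) = ∅) := by
        rw [Finset.filter_eq_empty_iff]
        push_neg at hq ⊢
        obtain ⟨k, hk⟩ := hq
        exact ⟨k, Finset.mem_univ k, by omega⟩
      rw [if_neg hne, if_neg hq, zero_mul]
  rw [Finset.sum_congr rfl h3, ← Finset.sum_filter]

lemma filter_lt_one (M : Fin r → ℕ) :
    (Q M).filter (fun q => ∀ k, q k < 1) = {(0 : Fin r → ℕ)} := by
  ext q
  simp only [Finset.mem_filter, mem_Q, Finset.mem_singleton, funext_iff, Pi.zero_apply]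
  constructor
  · rintro ⟨h1, h2⟩ k
    have := h2 k
    omega
  · intro h
    exact ⟨fun k => by rw [h k]; exact Nat.zero_le _, fun k => by rw [h k]; omega⟩

lemma evec_empty : evec (∅ : Finset (Fin r)) = 0 := by
  funext k; simp [evec]

end SteepAux

open SteepAux in
/-- `S(0,0,…,0) = 1`, and for every `(n, m⃗) ≠ (0, 0⃗)` with nonnegative entries,
`S(n, m⃗) = Σ_{k ≥ 1} S(n-k, m⃗) − Σ_{∅ ≠ p ⊆ {1,…,r}} (-1)^{|p|} S(n, m⃗ - e⃗_p)`
`+ Σ_{k ≥ 1} Σ_{∅ ≠ p ⊆ {1,…,r}} (-1)^{|p|} S(n-k, m⃗ - (k+1)e⃗_p)`. -/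
theorem steepCount_recursion (r : ℕ) :
    steepCount r 0 0 = 1 ∧
    ∀ (n : ℤ) (m : Fin r → ℤ), 0 ≤ n → (∀ k, 0 ≤ m k) →
      ¬(n = 0 ∧ ∀ k, m k = 0) →
      steepCount r n m =
        (∑ᶠ (k : ℕ) (_ : 1 ≤ k), steepCount r (n - k) m)
        - (∑ p ∈ (Finset.univ : Finset (Fin r)).powerset.erase ∅,
            (-1 : ℤ) ^ p.card * steepCount r n (m - evec p))
        + ∑ᶠ (k : ℕ) (_ : 1 ≤ k),
            ∑ p ∈ (Finset.univ : Finset (Fin r)).powerset.erase ∅,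
              (-1 : ℤ) ^ p.card * steepCount r (n - k) (m - ((k : ℤ) + 1) • evec p) := by
  constructor
  · rw [steepCount_eq 0 0 le_rfl (fun k => le_rfl)]
    simp only [Pi.zero_apply]
    have hQ : Q (fun k : Fin r => ((0:ℤ)).toNat) = {(0 : Fin r → ℕ)} := by
      ext q
      simp only [mem_Q, Finset.mem_singleton, funext_iff, Pi.zero_apply, Int.toNat_zero]
      exact ⟨fun h k => Nat.le_zero.mp (h k), fun h k => by rw [h k]⟩
    rw [hQ, Finset.sum_singleton]
    have : ((fun k : Fin r => ((0:ℤ)).toNat) - 0) = (0 : Fin r → ℕ) := by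
      funext k; simp
    rw [this]
    rw [show ((0:ℤ)).toNat = 0 from rfl, LFin_card]
    simp
  · intro n m hn hm hne
    obtain ⟨nn, rfl⟩ : ∃ nn : ℕ, n = (nn : ℤ) := ⟨n.toNat, (Int.toNat_of_nonneg hn).symm⟩
    obtain ⟨M, rfl⟩ : ∃ M : Fin r → ℕ, m = fun k => (M k : ℤ) :=
      ⟨fun k => (m k).toNat, funext fun k => (Int.toNat_of_nonneg (hm k)).symm⟩
    -- finsum conversions
    have fs1 : (∑ᶠ (k : ℕ) (_ : 1 ≤ k), steepCount r ((nn : ℤ) - k) (fun k => (M k : ℤ)))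
        = ∑ c ∈ Finset.Icc 1 nn, steepCount r ((nn : ℤ) - c) (fun k => (M k : ℤ)) := by
      apply finsum_cond_eq_sum_of_cond_iff
      intro x hx
      simp only [Finset.mem_Icc]
      constructor
      · intro h1
        refine ⟨h1, ?_⟩
        by_contra hgt
        push_neg at hgt
        exact hx (steepCount_neg _ _ (by rintro ⟨h0, -⟩; omega))
      · exact fun h => h.1
    have fs2 : (∑ᶠ (k : ℕ) (_ : 1 ≤ k),
          ∑ p ∈ (Finset.univ : Finset (Fin r)).powerset.erase ∅,
            (-1 : ℤ) ^ p.card * steepCount r ((nn : ℤ) - k)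
              ((fun k => (M k : ℤ)) - ((k : ℤ) + 1) • evec p))
        = ∑ c ∈ Finset.Icc 1 nn,
            ∑ p ∈ (Finset.univ : Finset (Fin r)).powerset.erase ∅,
              (-1 : ℤ) ^ p.card * steepCount r ((nn : ℤ) - c)
                ((fun k => (M k : ℤ)) - ((c : ℤ) + 1) • evec p) := by
      apply finsum_cond_eq_sum_of_cond_iff
      intro x hx
      simp only [Finset.mem_Icc]
      constructor
      · intro h1
        refine ⟨h1, ?_⟩
        by_contra hgt
        push_neg at hgt
        apply hx
        apply Finset.sum_eq_zero
        intro p _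
        rw [steepCount_neg _ _ (by rintro ⟨h0, -⟩; omega), mul_zero]
      · exact fun h => h.1
    rw [fs1, fs2]
    -- closed forms
    have hS : ∀ (nn' : ℕ), steepCount r (nn' : ℤ) (fun k => (M k : ℤ))
        = ∑ q ∈ Q M, ((LFin r nn' (M - q)).card : ℤ) := by
      intro nn'
      rw [steepCount_eq _ _ (by positivity) (fun k => by positivity)]
      have h1 : (fun k => (((M k : ℤ))).toNat) = M := by funext k; simp
      rw [show (((nn' : ℕ) : ℤ)).toNat = nn' from by simp, h1]
    -- the three components
    have hfull1 : ∑ p ∈ (Finset.univ : Finset (Fin r)).powerset,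
        (-1 : ℤ) ^ p.card * steepCount r (nn : ℤ) ((fun k => (M k : ℤ)) - evec p)
        = ((LFin r nn M).card : ℤ) := by
      have hk := key (r := r) nn 1 le_rfl M
      rw [filter_lt_one, Finset.sum_singleton] at hk
      rw [show (M - (0 : Fin r → ℕ)) = M from by funext k; simp] at hk
      rw [← hk]
      apply Finset.sum_congr rfl
      intro p _
      have e2 : (fun k => (M k : ℤ)) - evec p
          = (fun k => (M k : ℤ)) - ((1 : ℕ) : ℤ) • evec p := by
        rw [Nat.cast_one, one_smul]
      rw [e2]
    have hfull2 : ∀ c ∈ Finset.Icc 1 nn,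
        ∑ p ∈ (Finset.univ : Finset (Fin r)).powerset,
          (-1 : ℤ) ^ p.card * steepCount r ((nn : ℤ) - c)
            ((fun k => (M k : ℤ)) - ((c : ℤ) + 1) • evec p)
        = ∑ q ∈ (Q M).filter (fun q => ∀ k, q k < c + 1),
            ((LFin r (nn - c) (M - q)).card : ℤ) := by
      intro c hc
      rw [Finset.mem_Icc] at hc
      have hk := key (r := r) (nn - c) (c + 1) (by omega) M
      rw [← hk]
      apply Finset.sum_congr rfl
      intro p _
      have e1 : (nn : ℤ) - (c : ℤ) = ((nn - c : ℕ) : ℤ) := (Nat.cast_sub hc.2).symm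
      have e3 : (((c + 1 : ℕ) : ℤ)) = (c : ℤ) + 1 := by push_cast; ring
      have e2 : (fun k => (M k : ℤ)) - ((c : ℤ) + 1) • evec p
          = (fun k => (M k : ℤ)) - (((c + 1 : ℕ) : ℤ)) • evec p := by rw [e3]
      rw [e1, e2]
    -- erase ∅ versions
    have hemem : (∅ : Finset (Fin r)) ∈ (Finset.univ : Finset (Fin r)).powerset := by
      simp
    have he1 : ∑ p ∈ (Finset.univ : Finset (Fin r)).powerset.erase ∅,
        (-1 : ℤ) ^ p.card * steepCount r (nn : ℤ) ((fun k => (M k : ℤ)) - evec p)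
        = ((LFin r nn M).card : ℤ) - steepCount r (nn : ℤ) (fun k => (M k : ℤ)) := by
      rw [← hfull1]
      rw [← Finset.add_sum_erase _ _ hemem]
      rw [Finset.card_empty, pow_zero, one_mul, evec_empty, sub_zero]
      ring
    have he2 : ∀ c ∈ Finset.Icc 1 nn,
        ∑ p ∈ (Finset.univ : Finset (Fin r)).powerset.erase ∅,
          (-1 : ℤ) ^ p.card * steepCount r ((nn : ℤ) - c)
            ((fun k => (M k : ℤ)) - ((c : ℤ) + 1) • evec p)
        = (∑ q ∈ (Q M).filter (fun q => ∀ k, q k < c + 1),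
            ((LFin r (nn - c) (M - q)).card : ℤ))
            - steepCount r ((nn : ℤ) - c) (fun k => (M k : ℤ)) := by
      intro c hc
      rw [← hfull2 c hc]
      rw [← Finset.add_sum_erase _ _ hemem]
      rw [Finset.card_empty, pow_zero, one_mul, evec_empty, smul_zero, sub_zero]
      ring
    -- steepCount values
    have hval : ∀ c ∈ Finset.Icc 1 nn, steepCount r ((nn : ℤ) - c) (fun k => (M k : ℤ))
        = ∑ q ∈ Q M, ((LFin r (nn - c) (M - q)).card : ℤ) := by
      intro c hc
      rw [Finset.mem_Icc] at hc
      have harg : (nn : ℤ) - (c : ℤ) = ((nn - c : ℕ) : ℤ) := by omega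
      rw [harg, hS]
    have hval0 : steepCount r (nn : ℤ) (fun k => (M k : ℤ))
        = ∑ q ∈ Q M, ((LFin r nn (M - q)).card : ℤ) := hS nn
    -- LFin_card in ℤ
    have hδ : ¬(nn = 0 ∧ M = 0) := by
      rintro ⟨h1, h2⟩
      apply hne
      constructor
      · omega
      · intro k
        have := congrFun h2 k
        simp only [Pi.zero_apply] at this
        simp [this]
    have hG : ((LFin r nn M).card : ℤ)
        = ∑ c ∈ Finset.Icc 1 nn, ∑ q ∈ (Q M).filter (fun q => ∀ k, q k < c + 1),
            ((LFin r (nn - c) (M - q)).card : ℤ) := by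
      have hc := LFin_card (r := r) nn M
      rw [if_neg hδ, zero_add] at hc
      rw [hc]
      push_cast
      rfl
    rw [he1, Finset.sum_congr rfl he2, Finset.sum_sub_distrib, hval0,
      Finset.sum_congr rfl hval, ← hG]
    ring
end

section
/- Fix an integer r ≥ 0, and for nonnegative integers n, m_1, …, m_r let S(n, m_1, …, m_r) denote the number of steep sequences of degree (n; m_1, …, m_r). Then, in the ring of formal power series ℤ[[y, x_1, …, x_r]], the generating function F := Σ_{n, m_1, …, m_r ≥ 0} S(n, m_1, …, m_r) · y^n x_1^{m_1} ⋯ x_r^{m_r} satisfies G · F = 1, where G := Σ_{p ⊆ {1, …, r}} (−1)^{|p|} π(p) · (1 − Σ_{k ≥ 1} (π(p) y)^k), the sum is over all subsets p of {1, …, r}, and π(p) := ∏_{i ∈ p} x_i. -/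
/-- The variable `y` in `ℤ[[y, x_1, …, x_r]]`, realized as the multivariate power
series ring in the variables indexed by `Option (Fin r)`, with `y = X none`. -/
noncomputable def yvar (r : ℕ) : MvPowerSeries (Option (Fin r)) ℤ :=
  MvPowerSeries.X none

/-- `π(p) = ∏_{i ∈ p} x_i`, with `x_i = X (some i)`. -/
noncomputable def piProd {r : ℕ} (p : Finset (Fin r)) :
    MvPowerSeries (Option (Fin r)) ℤ :=
  ∏ i ∈ p, MvPowerSeries.X (some i)

/-- The geometric series `Σ_{k ≥ 1} (π(p) y)^k`, a well-defined formal power series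
since `π(p) y` has zero constant term: its coefficient at each exponent `d` is the
(finitely supported) sum of the corresponding coefficients of the `(π(p) y)^k`. -/
noncomputable def geomSeries {r : ℕ} (p : Finset (Fin r)) :
    MvPowerSeries (Option (Fin r)) ℤ :=
  fun d => ∑ᶠ (k : ℕ) (_ : 1 ≤ k), MvPowerSeries.coeff d ((piProd p * yvar r) ^ k)

/-- `G := Σ_{p ⊆ {1,…,r}} (-1)^{|p|} π(p) (1 − Σ_{k ≥ 1} (π(p) y)^k)`. -/
noncomputable def Gseries (r : ℕ) : MvPowerSeries (Option (Fin r)) ℤ :=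
  ∑ p ∈ (Finset.univ : Finset (Fin r)).powerset,
    (-1 : MvPowerSeries (Option (Fin r)) ℤ) ^ p.card * piProd p * (1 - geomSeries p)


open MvPowerSeries Finsupp Finset

variable {r : ℕ}

/-- exponent of `π(p)` -/
noncomputable def nu (p : Finset (Fin r)) : Option (Fin r) →₀ ℕ :=
  Finsupp.equivFunOnFinite.symm (fun o => o.elim 0 (fun i => if i ∈ p then 1 else 0))

/-- exponent of `π(p) y` -/
noncomputable def mu (p : Finset (Fin r)) : Option (Fin r) →₀ ℕ :=
  Finsupp.equivFunOnFinite.symm (fun o => o.elim 1 (fun i => if i ∈ p then 1 else 0))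

@[simp] lemma nu_none (p : Finset (Fin r)) : nu p none = 0 := rfl
@[simp] lemma nu_some (p : Finset (Fin r)) (i : Fin r) :
    nu p (some i) = if i ∈ p then 1 else 0 := rfl
@[simp] lemma mu_none (p : Finset (Fin r)) : mu p none = 1 := rfl
@[simp] lemma mu_some (p : Finset (Fin r)) (i : Fin r) :
    mu p (some i) = if i ∈ p then 1 else 0 := rfl

lemma piProd_eq (p : Finset (Fin r)) :
    piProd p = MvPowerSeries.monomial (nu p) 1 := by
  classical
  induction p using Finset.induction_on with
  | empty =>
    have : nu (∅ : Finset (Fin r)) = 0 := by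
      ext o; cases o <;> simp [nu]
    rw [piProd, Finset.prod_empty, this]
    exact (MvPowerSeries.monomial_zero_one).symm
  | @insert a s hx ih =>
    have hnu : nu (insert a s) = Finsupp.single (some a) 1 + nu s := by
      ext o; cases o with
      | none => simp
      | some i =>
        rcases eq_or_ne i a with rfl | h
        · simp [hx, Finsupp.single_apply]
        · simp [Finsupp.single_apply, h, Ne.symm h]
    rw [piProd, Finset.prod_insert hx, ← piProd, ih, hnu, MvPowerSeries.X_def,
      MvPowerSeries.monomial_mul_monomial, one_mul]

lemma monomial_one_pow (e : Option (Fin r) →₀ ℕ) (k : ℕ) :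
    (MvPowerSeries.monomial e (1:ℤ)) ^ k = MvPowerSeries.monomial (k • e) (1:ℤ) := by
  induction k with
  | zero => simp [MvPowerSeries.monomial_zero_one]
  | succ k ih =>
    rw [pow_succ, ih, MvPowerSeries.monomial_mul_monomial, one_mul, succ_nsmul]

lemma piProd_mul_yvar (p : Finset (Fin r)) :
    piProd p * yvar r = MvPowerSeries.monomial (mu p) 1 := by
  have h : nu p + Finsupp.single (none : Option (Fin r)) 1 = mu p := by
    ext o; cases o <;> simp [Finsupp.single_apply]
  rw [piProd_eq, yvar, MvPowerSeries.X_def, MvPowerSeries.monomial_mul_monomial, one_mul, h]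

lemma coeff_geomSeries (p : Finset (Fin r)) (d : Option (Fin r) →₀ ℕ) :
    MvPowerSeries.coeff d (geomSeries p)
      = if 1 ≤ d none ∧ d = d none • mu p then 1 else 0 := by
  classical
  rw [MvPowerSeries.coeff_apply]
  show (∑ᶠ (k : ℕ) (_ : 1 ≤ k), MvPowerSeries.coeff d ((piProd p * yvar r) ^ k)) = _
  have hco : ∀ k : ℕ, MvPowerSeries.coeff d ((piProd p * yvar r) ^ k)
      = if d = k • mu p then 1 else 0 := by
    intro k
    rw [piProd_mul_yvar, monomial_one_pow, MvPowerSeries.coeff_monomial]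
  have hterm : ∀ k : ℕ, (∑ᶠ (_ : 1 ≤ k), MvPowerSeries.coeff d ((piProd p * yvar r) ^ k))
      = if 1 ≤ k ∧ d = k • mu p then 1 else 0 := by
    intro k
    rw [finsum_eq_if, hco]
    by_cases h : 1 ≤ k <;> simp [h]
  rw [finsum_congr hterm]
  have hkey : ∀ k : ℕ, k ≠ d none → (if 1 ≤ k ∧ d = k • mu p then (1:ℤ) else 0) = 0 := by
    intro k hk
    rw [if_neg]
    rintro ⟨-, rfl⟩
    exact hk (by simp)
  rw [finsum_eq_single _ (d none) hkey]

/-- the series `B`: coefficient of a "last block". -/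
noncomputable def Bser (r : ℕ) : MvPowerSeries (Option (Fin r)) ℤ :=
  fun e => if 1 ≤ e none ∧ ∀ k, e (some k) ≤ e none then 1 else 0

/-- the series `A = ∏ (1-x_k)⁻¹`. -/
noncomputable def Aser (r : ℕ) : MvPowerSeries (Option (Fin r)) ℤ :=
  fun d => if d none = 0 then 1 else 0

lemma coeff_Bser (e : Option (Fin r) →₀ ℕ) :
    MvPowerSeries.coeff e (Bser r) = if 1 ≤ e none ∧ ∀ k, e (some k) ≤ e none then 1 else 0 :=
  rfl

lemma coeff_Aser (d : Option (Fin r) →₀ ℕ) :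
    MvPowerSeries.coeff d (Aser r) = if d none = 0 then 1 else 0 := rfl

noncomputable def Cser (r : ℕ) : MvPowerSeries (Option (Fin r)) ℤ :=
  ∏ k : Fin r, (1 - MvPowerSeries.X (some k))

lemma prod_ind (s : Finset (Fin r)) (P : Fin r → Prop) [DecidablePred P] :
    (∏ k ∈ s, if P k then (1:ℤ) else 0) = if ∀ k ∈ s, P k then 1 else 0 := by
  by_cases h : ∀ k ∈ s, P k
  · rw [if_pos h, Finset.prod_congr rfl fun k hk => if_pos (h k hk), Finset.prod_const_one]
  · push_neg at h
    obtain ⟨k, hk, hPk⟩ := h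
    rw [if_neg (by push_neg; exact ⟨k, hk, hPk⟩)]
    exact Finset.prod_eq_zero hk (if_neg hPk)

lemma prod_neg' (s : Finset (Fin r)) (f : Fin r → ℤ) :
    (∏ k ∈ s, -f k) = (-1)^s.card * ∏ k ∈ s, f k := by
  rw [← Finset.prod_const (-1 : ℤ), ← Finset.prod_mul_distrib]
  simp

lemma Cser_eq : Cser r = ∑ p : Finset (Fin r),
    (-1 : MvPowerSeries (Option (Fin r)) ℤ) ^ p.card * MvPowerSeries.monomial (nu p) 1 := by
  rw [Cser]
  have h : ∀ k : Fin r, (1 - MvPowerSeries.X (some k) : MvPowerSeries (Option (Fin r)) ℤ)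
      = -MvPowerSeries.X (some k) + 1 := fun k => by ring
  rw [Finset.prod_congr rfl fun k _ => h k, Fintype.prod_add]
  refine Finset.sum_congr rfl fun p _ => ?_
  rw [Finset.prod_const_one, mul_one, ← piProd_eq, piProd,
    show (∏ k ∈ p, -MvPowerSeries.X (some k) : MvPowerSeries (Option (Fin r)) ℤ)
      = ∏ k ∈ p, (-1) * MvPowerSeries.X (some k) from by simp,
    Finset.prod_mul_distrib, Finset.prod_const]

lemma pow_neg_one_eq (c : ℕ) : ((-1 : MvPowerSeries (Option (Fin r)) ℤ)) ^ c
    = MvPowerSeries.C (σ := Option (Fin r)) (R := ℤ) ((-1) ^ c) := by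
  rw [map_pow, map_neg, map_one]

lemma coeff_Cser_mul (φ : MvPowerSeries (Option (Fin r)) ℤ) (d : Option (Fin r) →₀ ℕ) :
    MvPowerSeries.coeff d (Cser r * φ)
      = ∑ p : Finset (Fin r), (-1 : ℤ)^p.card *
          (if nu p ≤ d then MvPowerSeries.coeff (d - nu p) φ else 0) := by
  classical
  rw [Cser_eq, Finset.sum_mul, map_sum]
  refine Finset.sum_congr rfl fun p _ => ?_
  rw [pow_neg_one_eq, ← MvPowerSeries.monomial_zero_eq_C_apply,
    MvPowerSeries.monomial_mul_monomial, zero_add, mul_one, MvPowerSeries.coeff_monomial_mul]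
  split_ifs <;> simp

lemma coeff_Gseries (d : Option (Fin r) →₀ ℕ) :
    MvPowerSeries.coeff d (Gseries r)
      = ∑ p : Finset (Fin r), (-1 : ℤ)^p.card *
          (if nu p ≤ d then MvPowerSeries.coeff (d - nu p) (1 - geomSeries p) else 0) := by
  classical
  rw [Gseries, Finset.powerset_univ, map_sum]
  refine Finset.sum_congr rfl fun p _ => ?_
  rw [piProd_eq, pow_neg_one_eq, ← MvPowerSeries.monomial_zero_eq_C_apply,
    MvPowerSeries.monomial_mul_monomial, zero_add, mul_one, MvPowerSeries.coeff_monomial_mul]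
  split_ifs <;> simp

lemma sub_none (d : Option (Fin r) →₀ ℕ) (p : Finset (Fin r)) :
    (d - nu p) none = d none := by
  rw [Finsupp.tsub_apply, nu_none, Nat.sub_zero]

lemma sub_some (d : Option (Fin r) →₀ ℕ) (p : Finset (Fin r)) (k : Fin r) :
    (d - nu p) (some k) = d (some k) - (if k ∈ p then 1 else 0) := by
  rw [Finsupp.tsub_apply, nu_some]

lemma Cser_mul_Aser : Cser r * Aser r = 1 := by
  classical
  apply MvPowerSeries.ext; intro d
  rw [coeff_Cser_mul, MvPowerSeries.coeff_one]
  by_cases h0 : d none = 0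
  · have hd0 : (d = 0) ↔ ∀ k ∈ (Finset.univ : Finset (Fin r)), d (some k) = 0 := by
      constructor
      · intro h k _; rw [h]; rfl
      · intro h; ext o; cases o with
        | none => exact h0
        | some k => exact h k (Finset.mem_univ k)
    have hterm : ∀ p : Finset (Fin r), (-1 : ℤ)^p.card *
        (if nu p ≤ d then MvPowerSeries.coeff (d - nu p) (Aser r) else 0)
        = (∏ k ∈ p, -(if 1 ≤ d (some k) then (1:ℤ) else 0)) *
            ∏ k ∈ pᶜ, (1 : ℤ) := by
      intro p
      rw [coeff_Aser]
      have h1 : (if (d - nu p) none = 0 then (1:ℤ) else 0) = 1 := by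
        rw [if_pos]; rw [sub_none]; exact h0
      have h2 : (nu p ≤ d) ↔ ∀ k ∈ p, 1 ≤ d (some k) := by
        constructor
        · intro h k hk
          have := h (some k)
          rwa [nu_some, if_pos hk] at this
        · intro h o
          cases o with
          | none => simp
          | some k =>
            rw [nu_some]
            by_cases hk : k ∈ p
            · rw [if_pos hk]; exact h k hk
            · simp [hk]
      rw [Finset.prod_const_one, mul_one, prod_neg', prod_ind]
      by_cases hc : ∀ k ∈ p, 1 ≤ d (some k)
      · rw [if_pos (h2.2 hc), h1, if_pos hc]
      · rw [if_neg (fun h => hc (h2.1 h)), if_neg hc, mul_zero]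
    rw [Finset.sum_congr rfl fun p _ => hterm p, ← Fintype.prod_add]
    have : ∀ k : Fin r, (-(if 1 ≤ d (some k) then (1:ℤ) else 0) + 1)
        = if d (some k) = 0 then 1 else 0 := by
      intro k; split_ifs <;> omega
    rw [Finset.prod_congr rfl fun k _ => this k, prod_ind]
    by_cases hd : d = 0
    · rw [if_pos (hd0.1 hd), if_pos hd]
    · rw [if_neg (fun h => hd (hd0.2 h)), if_neg hd]
  · have hd : d ≠ 0 := fun h => h0 (by rw [h]; rfl)
    rw [if_neg hd]
    refine Finset.sum_eq_zero fun p _ => ?_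
    rw [coeff_Aser]
    have : (d - nu p) none ≠ 0 := by rw [sub_none]; exact h0
    rw [if_neg this]
    split_ifs <;> simp

lemma Gseries_eq : Gseries r = Cser r * (1 - Bser r) := by
  classical
  apply MvPowerSeries.ext; intro d
  rw [coeff_Gseries, coeff_Cser_mul]
  have hsplit : ∀ (ψ ψ' : Finset (Fin r) → MvPowerSeries (Option (Fin r)) ℤ),
      (∑ p : Finset (Fin r), (-1:ℤ)^p.card *
        (if nu p ≤ d then MvPowerSeries.coeff (d - nu p) (ψ p - ψ' p) else 0))
      = (∑ p : Finset (Fin r), (-1:ℤ)^p.card *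
          (if nu p ≤ d then MvPowerSeries.coeff (d - nu p) (ψ p) else 0))
        - (∑ p : Finset (Fin r), (-1:ℤ)^p.card *
          (if nu p ≤ d then MvPowerSeries.coeff (d - nu p) (ψ' p) else 0)) := by
    intro ψ ψ'
    rw [← Finset.sum_sub_distrib]
    refine Finset.sum_congr rfl fun p _ => ?_
    rw [← mul_sub]
    congr 1
    split_ifs with h
    · exact map_sub _ _ _
    · rw [sub_zero]
  rw [hsplit (fun _ => 1) geomSeries, hsplit (fun _ => 1) (fun _ => Bser r)]
  congr 1
  by_cases h0 : d none = 0
  · refine Finset.sum_congr rfl fun p _ => ?_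
    rw [coeff_geomSeries, coeff_Bser]
    have h1 : ¬ (1 ≤ (d - nu p) none ∧ d - nu p = (d - nu p) none • mu p) := by
      rw [sub_none, h0]; rintro ⟨h, -⟩; omega
    have h2 : ¬ (1 ≤ (d - nu p) none ∧ ∀ k, (d - nu p) (some k) ≤ (d - nu p) none) := by
      rw [sub_none, h0]; rintro ⟨h, -⟩; omega
    rw [if_neg h1, if_neg h2]
  · have hn1 : 1 ≤ d none := Nat.one_le_iff_ne_zero.2 h0
    trans (∏ k : Fin r, (-(if d (some k) = d none + 1 then (1:ℤ) else 0)
        + (if d (some k) = 0 then (1:ℤ) else 0)))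
    · rw [Fintype.prod_add]
      refine Finset.sum_congr rfl fun p _ => ?_
      rw [coeff_geomSeries, ← ite_and, prod_neg', prod_ind, prod_ind]
      have hiff : (nu p ≤ d ∧ 1 ≤ (d - nu p) none ∧ d - nu p = (d - nu p) none • mu p)
          ↔ ((∀ k ∈ p, d (some k) = d none + 1) ∧ ∀ k ∈ pᶜ, d (some k) = 0) := by
        constructor
        · rintro ⟨hle, -, heq⟩
          constructor
          · intro k hk
            have h := DFunLike.congr_fun heq (some k)
            have h2 := hle (some k)
            rw [sub_some, sub_none, Finsupp.smul_apply, mu_some, if_pos hk] at h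
            rw [nu_some, if_pos hk] at h2
            simp only [smul_eq_mul, mul_one] at h
            omega
          · intro k hk
            rw [Finset.mem_compl] at hk
            have h := DFunLike.congr_fun heq (some k)
            rw [sub_some, sub_none, Finsupp.smul_apply, mu_some, if_neg hk] at h
            simp only [smul_eq_mul, mul_zero, if_neg hk] at h
            omega
        · rintro ⟨h1, h2⟩
          have hle : nu p ≤ d := by
            intro o
            cases o with
            | none => simp
            | some k =>
              rw [nu_some]
              by_cases hk : k ∈ p
              · rw [if_pos hk, h1 k hk]; omega
              · simp [hk]
          refine ⟨hle, by rw [sub_none]; exact hn1, ?_⟩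
          ext o
          cases o with
          | none => rw [sub_none, Finsupp.smul_apply, mu_none, smul_eq_mul, mul_one]
          | some k =>
            rw [sub_some, Finsupp.smul_apply, mu_some, sub_none, smul_eq_mul]
            by_cases hk : k ∈ p
            · rw [if_pos hk]; have := h1 k hk; omega
            · rw [if_neg hk]; have := h2 k (Finset.mem_compl.2 hk); omega
      by_cases hc : (∀ k ∈ p, d (some k) = d none + 1) ∧ ∀ k ∈ pᶜ, d (some k) = 0
      · rw [if_pos (hiff.2 hc), if_pos hc.1, if_pos hc.2]; ring
      · rw [if_neg (fun h => hc (hiff.1 h))]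
        rcases not_and_or.1 hc with h | h
        · rw [if_neg h]; ring
        · rw [if_neg h]; ring
    trans (∏ k : Fin r, (-(if 1 ≤ d (some k) ∧ d (some k) ≤ d none + 1 then (1:ℤ) else 0)
        + (if d (some k) ≤ d none then (1:ℤ) else 0)))
    · refine Finset.prod_congr rfl fun k _ => ?_
      split_ifs <;> omega
    · rw [Fintype.prod_add]
      refine Finset.sum_congr rfl fun p _ => ?_
      rw [coeff_Bser, ← ite_and, prod_neg', prod_ind, prod_ind]
      have hiff : (nu p ≤ d ∧ 1 ≤ (d - nu p) none ∧ ∀ k, (d - nu p) (some k) ≤ (d - nu p) none)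
          ↔ ((∀ k ∈ p, 1 ≤ d (some k) ∧ d (some k) ≤ d none + 1) ∧
              ∀ k ∈ pᶜ, d (some k) ≤ d none) := by
        constructor
        · rintro ⟨hle, -, hb⟩
          constructor
          · intro k hk
            have h := hb k
            have h2 := hle (some k)
            rw [sub_some, sub_none, if_pos hk] at h
            rw [nu_some, if_pos hk] at h2
            omega
          · intro k hk
            rw [Finset.mem_compl] at hk
            have h := hb k
            rw [sub_some, sub_none, if_neg hk] at h
            omega
        · rintro ⟨h1, h2⟩
          have hle : nu p ≤ d := by
            intro o
            cases o with
            | none => simp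
            | some k =>
              rw [nu_some]
              by_cases hk : k ∈ p
              · rw [if_pos hk]; exact (h1 k hk).1
              · simp [hk]
          refine ⟨hle, by rw [sub_none]; exact hn1, ?_⟩
          intro k
          rw [sub_some, sub_none]
          by_cases hk : k ∈ p
          · have := (h1 k hk).2; rw [if_pos hk]; omega
          · have := h2 k (Finset.mem_compl.2 hk); rw [if_neg hk]; omega
      by_cases hc : (∀ k ∈ p, 1 ≤ d (some k) ∧ d (some k) ≤ d none + 1) ∧
          ∀ k ∈ pᶜ, d (some k) ≤ d none
      · rw [if_pos (hiff.2 hc), if_pos hc.1, if_pos hc.2]; ring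
      · rw [if_neg (fun h => hc (hiff.1 h))]
        rcases not_and_or.1 hc with h | h
        · rw [if_neg h]; ring
        · rw [if_neg h]; ring

/-! ### Combinatorial part -/

instance uniqueSteepZero (m : Fin r → ℕ) : Unique (SteepSeq r 0 m) where
  default :=
    { N := 0
      c := fun i => i.elim0
      c_pos := fun i => i.elim0
      p := fun _ => m
      sum_c := by simp
      sum_p := fun k => by simp
      steep := fun i => i.elim0 }
  uniq := by
    rintro ⟨N, c, hc, p, h1, h2, h3⟩
    have hN : N = 0 := by
      by_contra h
      have h4 : 1 ≤ c ⟨0, Nat.pos_of_ne_zero h⟩ := hc _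
      have h5 : c ⟨0, Nat.pos_of_ne_zero h⟩ ≤ ∑ i, c i :=
        Finset.single_le_sum (fun i _ => Nat.zero_le _) (Finset.mem_univ _)
      omega
    subst hN
    have hcc : c = fun i => i.elim0 := funext fun i => i.elim0
    have hpp : p = fun _ => m := by
      funext i k
      have h := h2 k
      rw [Fin.sum_univ_one] at h
      have hi0 : i = 0 := Fin.ext (by omega)
      rw [hi0, h]
    subst hcc
    subst hpp
    rfl

theorem SteepSeq.ext'' {n : ℕ} {m : Fin r → ℕ} {s t : SteepSeq r n m} (hN : s.N = t.N)
    (hc : ∀ (i : ℕ) (hi : i < s.N) (hi' : i < t.N), s.c ⟨i, hi⟩ = t.c ⟨i, hi'⟩)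
    (hp : ∀ (i : ℕ) (hi : i < s.N + 1) (hi' : i < t.N + 1) (k : Fin r),
      s.p ⟨i, hi⟩ k = t.p ⟨i, hi'⟩ k) :
    s = t := by
  rcases s with ⟨N, c, hc1, p, hs1, hs2, hs3⟩
  rcases t with ⟨N', c', hc1', p', ht1, ht2, ht3⟩
  dsimp at hN hc hp
  subst hN
  have h1 : c = c' := funext fun i => by
    have := hc i.val i.isLt i.isLt
    simpa using this
  have h2 : p = p' := funext fun i => funext fun k => by
    have := hp i.val i.isLt i.isLt k
    simpa using this
  subst h1
  subst h2
  rfl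

theorem SteepSeq.heq'' {n n' : ℕ} {m m' : Fin r → ℕ} (hn : n = n') (hm : m = m')
    {s : SteepSeq r n m} {t : SteepSeq r n' m'} (hN : s.N = t.N)
    (hc : ∀ (i : ℕ) (hi : i < s.N) (hi' : i < t.N), s.c ⟨i, hi⟩ = t.c ⟨i, hi'⟩)
    (hp : ∀ (i : ℕ) (hi : i < s.N + 1) (hi' : i < t.N + 1) (k : Fin r),
      s.p ⟨i, hi⟩ k = t.p ⟨i, hi'⟩ k) : HEq s t := by
  subst hn
  subst hm
  exact heq_of_eq (SteepSeq.ext'' hN hc hp)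

lemma sum_split {N M : ℕ} (h : N = M + 1) (f : Fin N → ℕ) :
    ∑ i, f i = (∑ i : Fin M, f ⟨i, by omega⟩) + f ⟨M, by omega⟩ := by
  subst h
  rw [Fin.sum_univ_castSucc]
  rfl

noncomputable def LBset (d : Option (Fin r) →₀ ℕ) :
    Finset ((Option (Fin r) →₀ ℕ) × (Option (Fin r) →₀ ℕ)) :=
  (Finset.HasAntidiagonal.antidiagonal d).filter (fun ef => 1 ≤ ef.1 none ∧ ∀ k, ef.1 (some k) ≤ ef.1 none)

lemma mem_LBset {d x} : x ∈ LBset (r := r) d ↔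
    (x.1 + x.2 = d ∧ (1 ≤ x.1 none ∧ ∀ k, x.1 (some k) ≤ x.1 none)) := by
  rw [LBset, Finset.mem_filter, Finset.HasAntidiagonal.mem_antidiagonal]

lemma N_pos {d : Option (Fin r) →₀ ℕ} (hd : d none ≠ 0)
    (s : SteepSeq r (d none) (fun k => d (some k))) : 0 < s.N := by
  rcases Nat.eq_zero_or_pos s.N with h | h
  · exfalso
    have he : IsEmpty (Fin s.N) := by rw [h]; infer_instance
    have h0 : ∑ i, s.c i = 0 := by rw [Finset.univ_eq_empty, Finset.sum_empty]
    exact hd (s.sum_c ▸ h0)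
  · exact h

noncomputable def lastE {n : ℕ} {m : Fin r → ℕ} (s : SteepSeq r n m) (hN : 0 < s.N) :
    Option (Fin r) →₀ ℕ :=
  Finsupp.equivFunOnFinite.symm
    (fun o => o.elim (s.c ⟨s.N - 1, by omega⟩) (fun k => s.p ⟨s.N, by omega⟩ k))

lemma lastE_none {n m} (s : SteepSeq r n m) (hN : 0 < s.N) :
    lastE s hN none = s.c ⟨s.N - 1, by omega⟩ := rfl

lemma lastE_some {n m} (s : SteepSeq r n m) (hN : 0 < s.N) (k : Fin r) :
    lastE s hN (some k) = s.p ⟨s.N, by omega⟩ k := rfl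


open MvPowerSeries Finsupp Finset
variable {r : ℕ}

def initSeq {n : ℕ} {m : Fin r → ℕ} (s : SteepSeq r n m) (hN : 0 < s.N) :
    SteepSeq r (n - lastE s hN none) (fun k => m k - lastE s hN (some k)) where
  N := s.N - 1
  c := fun i => s.c ⟨i.val, by have := i.isLt; omega⟩
  c_pos := fun i => s.c_pos _
  p := fun i => s.p ⟨i.val, by have := i.isLt; omega⟩
  sum_c := by
    have h := sum_split (N := s.N) (M := s.N - 1) (by omega) s.c
    rw [s.sum_c] at h
    rw [lastE_none]
    omega
  sum_p := fun k => by
    have h := sum_split (N := s.N + 1) (M := s.N - 1 + 1) (by omega) (fun i => s.p i k)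
    rw [s.sum_p k] at h
    rw [lastE_some]
    have h3 : (⟨s.N - 1 + 1, by omega⟩ : Fin (s.N + 1)) = ⟨s.N, by omega⟩ :=
      Fin.ext (show s.N - 1 + 1 = s.N by omega)
    rw [h3] at h
    omega
  steep := fun i k => by
    have h := s.steep ⟨i.val, by have := i.isLt; omega⟩ k
    exact h

def snocSeq {d : Option (Fin r) →₀ ℕ}
    (x : (Option (Fin r) →₀ ℕ) × (Option (Fin r) →₀ ℕ)) (hx : x ∈ LBset d)
    (t : SteepSeq r (x.2 none) (fun k => x.2 (some k))) :
    SteepSeq r (d none) (fun k => d (some k)) where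
  N := t.N + 1
  c := Fin.snoc t.c (x.1 none)
  c_pos := fun i => by
    refine Fin.lastCases ?_ ?_ i
    · rw [Fin.snoc_last]
      exact (mem_LBset.1 hx).2.1
    · intro j
      rw [Fin.snoc_castSucc]
      exact t.c_pos j
  p := Fin.snoc t.p (fun k => x.1 (some k))
  sum_c := by
    rw [Fin.sum_univ_castSucc]
    simp only [Fin.snoc_castSucc, Fin.snoc_last]
    have h1 := t.sum_c
    have h2 := DFunLike.congr_fun (mem_LBset.1 hx).1 (none : Option (Fin r))
    rw [Finsupp.add_apply] at h2
    omega
  sum_p := fun k => by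
    rw [Fin.sum_univ_castSucc]
    simp only [Fin.snoc_castSucc, Fin.snoc_last]
    have h1 := t.sum_p k
    have h2 := DFunLike.congr_fun (mem_LBset.1 hx).1 (some k)
    rw [Finsupp.add_apply] at h2
    omega
  steep := fun i k => by
    refine Fin.lastCases ?_ ?_ i
    · rw [Fin.succ_last, Fin.snoc_last, Fin.snoc_last]
      exact (mem_LBset.1 hx).2.2 k
    · intro j
      rw [Fin.succ_castSucc, Fin.snoc_castSucc, Fin.snoc_castSucc]
      exact t.steep j k

lemma lastE_le {d : Option (Fin r) →₀ ℕ} (hd : d none ≠ 0)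
    (s : SteepSeq r (d none) (fun k => d (some k))) :
    lastE s (N_pos hd s) ≤ d := by
  rw [Finsupp.le_def]
  intro o
  cases o with
  | none =>
    rw [lastE_none]
    calc s.c ⟨s.N - 1, by have := N_pos hd s; omega⟩ ≤ ∑ i, s.c i :=
          Finset.single_le_sum (fun i _ => Nat.zero_le _) (Finset.mem_univ _)
      _ = d none := s.sum_c
  | some k =>
    rw [lastE_some]
    calc s.p ⟨s.N, by omega⟩ k ≤ ∑ i, s.p i k :=
          Finset.single_le_sum (f := fun i => s.p i k) (fun i _ => Nat.zero_le _)
            (Finset.mem_univ _)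
      _ = d (some k) := s.sum_p k

lemma lastE_mem {d : Option (Fin r) →₀ ℕ} (hd : d none ≠ 0)
    (s : SteepSeq r (d none) (fun k => d (some k))) :
    (lastE s (N_pos hd s), d - lastE s (N_pos hd s)) ∈ LBset d := by
  have hN := N_pos hd s
  rw [mem_LBset]
  refine ⟨add_tsub_cancel_of_le (lastE_le hd s), ?_, ?_⟩
  · rw [lastE_none]
    exact s.c_pos _
  · intro k
    rw [lastE_some, lastE_none]
    have hst := s.steep ⟨s.N - 1, by omega⟩ k
    have hsucc : (⟨s.N - 1, by omega⟩ : Fin s.N).succ = ⟨s.N, by omega⟩ :=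
      Fin.ext (show s.N - 1 + 1 = s.N by omega)
    rwa [hsucc] at hst

noncomputable def lastEquiv (d : Option (Fin r) →₀ ℕ) (hd : d none ≠ 0) :
    SteepSeq r (d none) (fun k => d (some k)) ≃
      Σ x : ↥(LBset (r := r) d), SteepSeq r (x.1.2 none) (fun k => x.1.2 (some k)) where
  toFun s := ⟨⟨(lastE s (N_pos hd s), d - lastE s (N_pos hd s)), lastE_mem hd s⟩,
    initSeq s (N_pos hd s)⟩
  invFun xt := snocSeq xt.1.1 xt.1.2 xt.2
  left_inv s := by
    dsimp only
    have hN := N_pos hd s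
    apply SteepSeq.ext''
    · show s.N - 1 + 1 = s.N
      omega
    · intro i hi hi'
      show Fin.snoc (α := fun _ => ℕ) (initSeq s (N_pos hd s)).c
        (lastE s (N_pos hd s) none) ⟨i, hi⟩ = s.c ⟨i, hi'⟩
      by_cases h : i < (initSeq s (N_pos hd s)).N
      · have hcast : (⟨i, hi⟩ : Fin ((initSeq s (N_pos hd s)).N + 1))
            = Fin.castSucc ⟨i, h⟩ := rfl
        rw [hcast, Fin.snoc_castSucc]
        rfl
      · have h' : ¬ i < s.N - 1 := h
        have hlast : (⟨i, hi⟩ : Fin ((initSeq s (N_pos hd s)).N + 1))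
            = Fin.last ((initSeq s (N_pos hd s)).N) := Fin.ext (show i = s.N - 1 by omega)
        rw [hlast, Fin.snoc_last, lastE_none]
        congr 1
        exact Fin.ext (show s.N - 1 = i by omega)
    · intro i hi hi' k
      show Fin.snoc (α := fun _ => Fin r → ℕ) (initSeq s (N_pos hd s)).p
        (fun k => lastE s (N_pos hd s) (some k)) ⟨i, hi⟩ k = s.p ⟨i, hi'⟩ k
      by_cases h : i < (initSeq s (N_pos hd s)).N + 1
      · have hcast : (⟨i, hi⟩ : Fin ((initSeq s (N_pos hd s)).N + 1 + 1))
            = Fin.castSucc ⟨i, h⟩ := rfl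
        rw [hcast, Fin.snoc_castSucc]
        rfl
      · have h' : ¬ i < s.N - 1 + 1 := h
        have hlast : (⟨i, hi⟩ : Fin ((initSeq s (N_pos hd s)).N + 1 + 1))
            = Fin.last ((initSeq s (N_pos hd s)).N + 1) :=
          Fin.ext (show i = s.N - 1 + 1 by omega)
        rw [hlast, Fin.snoc_last]
        show lastE s (N_pos hd s) (some k) = s.p ⟨i, hi'⟩ k
        rw [lastE_some]
        congr 1
        exact Fin.ext (show s.N = i by omega)
  right_inv := by
    rintro ⟨⟨x, hx⟩, t⟩
    dsimp only
    have he : lastE (snocSeq x hx t) (N_pos hd _) = x.1 := by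
      ext o
      cases o with
      | none =>
        rw [lastE_none]
        show Fin.snoc (α := fun _ => ℕ) t.c (x.1 none) (Fin.last t.N) = x.1 none
        rw [Fin.snoc_last]
      | some k =>
        rw [lastE_some]
        show Fin.snoc (α := fun _ => Fin r → ℕ) t.p (fun k => x.1 (some k))
          (Fin.last (t.N + 1)) k = x.1 (some k)
        rw [Fin.snoc_last]
    have hf : d - lastE (snocSeq x hx t) (N_pos hd _) = x.2 := by
      rw [he]
      ext a
      have h2 := DFunLike.congr_fun (mem_LBset.1 hx).1 a
      rw [Finsupp.add_apply] at h2
      rw [Finsupp.tsub_apply]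
      omega
    refine Sigma.ext ?_ ?_
    · exact Subtype.ext (Prod.ext he hf)
    · refine SteepSeq.heq'' ?_ ?_ ?_ ?_ ?_
      · have h3 := DFunLike.congr_fun hf none
        rwa [Finsupp.tsub_apply] at h3
      · funext k
        have h3 := DFunLike.congr_fun hf (some k)
        rwa [Finsupp.tsub_apply] at h3
      · show (snocSeq x hx t).N - 1 = t.N
        rfl
      · intro i hi hi'
        show Fin.snoc (α := fun _ => ℕ) t.c (x.1 none) (Fin.castSucc ⟨i, hi'⟩) = t.c ⟨i, hi'⟩
        rw [Fin.snoc_castSucc]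
      · intro i hi hi' k
        show Fin.snoc (α := fun _ => Fin r → ℕ) t.p (fun k => x.1 (some k))
          (Fin.castSucc ⟨i, hi'⟩) k = t.p ⟨i, hi'⟩ k
        rw [Fin.snoc_castSucc]

lemma steep_finite : ∀ (n : ℕ) (m : Fin r → ℕ), Finite (SteepSeq r n m) := by
  intro n
  induction n using Nat.strong_induction_on with
  | _ n IH =>
    intro m
    rcases Nat.eq_zero_or_pos n with rfl | hn
    · infer_instance
    · set d : Option (Fin r) →₀ ℕ := Finsupp.equivFunOnFinite.symm (fun o => o.elim n m) with hd
      have hdn : d none = n := rfl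
      have hd0 : d none ≠ 0 := by omega
      have e := lastEquiv d hd0
      haveI : ∀ x : ↥(LBset (r := r) d),
          Finite (SteepSeq r (x.1.2 none) (fun k => x.1.2 (some k))) := by
        intro x
        have hmem := mem_LBset.1 x.2
        have hlt : x.1.2 none < n := by
          have h1 := DFunLike.congr_fun hmem.1 none
          rw [Finsupp.add_apply] at h1
          have h2 := hmem.2.1
          rw [hdn] at h1
          omega
        exact IH _ hlt _
      exact Finite.of_equiv _ e.symm

instance steep_finite' {n : ℕ} {m : Fin r → ℕ} : Finite (SteepSeq r n m) := steep_finite n m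

lemma card_rec (d : Option (Fin r) →₀ ℕ) (hd : d none ≠ 0) :
    Nat.card (SteepSeq r (d none) (fun k => d (some k)))
      = ∑ x ∈ LBset (r := r) d, Nat.card (SteepSeq r (x.2 none) (fun k => x.2 (some k))) := by
  rw [Nat.card_congr (lastEquiv d hd)]
  letI : ∀ x : ↥(LBset (r := r) d),
      Fintype (SteepSeq r (x.1.2 none) (fun k => x.1.2 (some k))) := fun x => Fintype.ofFinite _
  rw [Nat.card_eq_fintype_card, Fintype.card_sigma,
    ← Finset.sum_coe_sort (LBset (r := r) d)
      (fun x => Nat.card (SteepSeq r (x.2 none) (fun k => x.2 (some k))))]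
  exact Fintype.sum_congr _ _ fun x => (Nat.card_eq_fintype_card).symm

lemma one_sub_B_mul_F (F : MvPowerSeries (Option (Fin r)) ℤ)
    (hF : ∀ d : Option (Fin r) →₀ ℕ,
      MvPowerSeries.coeff d F
        = (Nat.card (SteepSeq r (d none) fun i => d (some i)) : ℤ)) :
    (1 - Bser r) * F = Aser r := by
  classical
  apply MvPowerSeries.ext; intro d
  have hexp : (1 - Bser r) * F = F - Bser r * F := by ring
  rw [hexp, map_sub, hF d, coeff_Aser]
  by_cases h0 : d none = 0
  · rw [if_pos h0]
    have hcard : Nat.card (SteepSeq r (d none) fun i => d (some i)) = 1 := by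
      rw [h0]; exact Nat.card_unique
    rw [hcard]
    have hB : MvPowerSeries.coeff d (Bser r * F) = 0 := by
      rw [MvPowerSeries.coeff_mul]
      refine Finset.sum_eq_zero fun x hx => ?_
      rw [Finset.HasAntidiagonal.mem_antidiagonal] at hx
      have h1 := DFunLike.congr_fun hx none
      rw [Finsupp.add_apply] at h1
      have h2 : ¬ (1 ≤ x.1 none ∧ ∀ k, x.1 (some k) ≤ x.1 none) := by
        rintro ⟨h2, -⟩; omega
      rw [coeff_Bser, if_neg h2, zero_mul]
    rw [hB]
    norm_num
  · rw [if_neg h0, MvPowerSeries.coeff_mul, sub_eq_zero]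
    have hsum : ∀ x ∈ Finset.HasAntidiagonal.antidiagonal d,
        MvPowerSeries.coeff x.1 (Bser r) * MvPowerSeries.coeff x.2 F
          = if (1 ≤ x.1 none ∧ ∀ k, x.1 (some k) ≤ x.1 none) then
              (Nat.card (SteepSeq r (x.2 none) fun i => x.2 (some i)) : ℤ) else 0 := by
      intro x hx
      rw [coeff_Bser, hF x.2]
      split_ifs <;> simp
    rw [Finset.sum_congr rfl hsum, ← Finset.sum_filter]
    have hc := card_rec d h0
    rw [hc]
    push_cast
    rfl

/-- The generating function `F = Σ S(n, m⃗) y^n x_1^{m_1} ⋯ x_r^{m_r}` of the numbers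
of steep sequences satisfies `G · F = 1` in `ℤ[[y, x_1, …, x_r]]`. -/
theorem steep_generating_function (r : ℕ) (F : MvPowerSeries (Option (Fin r)) ℤ)
    (hF : ∀ d : Option (Fin r) →₀ ℕ,
      MvPowerSeries.coeff d F
        = (Nat.card (SteepSeq r (d none) fun i => d (some i)) : ℤ)) :
    Gseries r * F = 1 := by
  rw [Gseries_eq, mul_assoc, one_sub_B_mul_F F hF, Cser_mul_Aser]
end
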